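/- arXiv:1709.02485 — 5 statements merged into one kernel-verified Lean document; each statement's English description precedes it below -/
import Mathlib

section
/- Let k ⊆ l be number fields, let ω₁, …, ω_e be a k-basis of l contained in O_l, and let 𝔐 ⊆ O_l be the full O_k-module they generate. Let E_{l/k}(𝔐) = {α ∈ O_𝔐^× : Norm_{l/k}(α) ∈ Tor(O_k^×)} be the group of relative units, where O_𝔐 = {α ∈ l : α𝔐 ⊆ 𝔐} and O_𝔐^× = O_𝔐 ∩ O_l^×. Assume that the rank of E_{l/k}(𝔐) is zero. If β ≠ 0 is a point in O_k and μ ≠ 0 is a point in 𝔐 such that Norm_{l/k}(μ) = ζβ for some root of unity ζ ∈ Tor(O_k^×), then h(μ) = [l : k]^{-1}·h(β). -/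
open NumberField Module

/-- The normalized logarithmic absolute value `log |x|_w` at an infinite place `w`
of a number field `F`, where `|·|_w = ‖·‖_w^{d_w/d}`. -/
noncomputable def infLogAbs (F : Type*) [Field F] [NumberField F]
    (w : InfinitePlace F) (x : F) : ℝ :=
  (w.mult : ℝ) / (finrank ℚ F : ℝ) * Real.log (w x)

/-- The normalized logarithmic absolute value `log |x|_v` at a finite place `v`
of a number field `F`. -/
noncomputable def finLogAbs (F : Type*) [Field F] [NumberField F]
    (v : IsDedekindDomain.HeightOneSpectrum (𝓞 F)) (x : F) : ℝ :=
  if h : (v.valuation (K := F)) x = 0 then 0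
  else ((Multiplicative.toAdd (WithZero.unzero h) : ℤ) : ℝ) / (finrank ℚ F : ℝ) *
    Real.log (Ideal.absNorm v.asIdeal)

/-- The absolute logarithmic Weil height `h(x) = ∑_w log⁺ |x|_w`, the sum running over
all (infinite and finite) places of the number field `F`. -/
noncomputable def weilHeight (F : Type*) [Field F] [NumberField F] (x : F) : ℝ :=
  (∑ w : InfinitePlace F, max 0 (infLogAbs F w x)) +
    ∑ᶠ v : IsDedekindDomain.HeightOneSpectrum (𝓞 F), max 0 (finLogAbs F v x)

/-- The full `O_k`-module `𝔐` generated by elements `ω i` of `l`. -/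
def fullModule (K : Type*) [Field K] [NumberField K] {L : Type*} [Field L]
    [Algebra K L] {e : ℕ} (ω : Fin e → L) : Set L :=
  {x | ∃ ν : Fin e → 𝓞 K, x = ∑ i, algebraMap K L (ν i : K) * ω i}

/-- The coefficient ring `O_𝔐 = {α ∈ l : α𝔐 ⊆ 𝔐}` of a full module `𝔐 ⊆ l`. -/
def coeffRing {L : Type*} [Field L] (M : Set L) : Set L :=
  {α | ∀ x ∈ M, α * x ∈ M}

/-- The unit group `O_𝔐^× = O_𝔐 ∩ O_l^×` of the coefficient ring. -/
def coeffRingUnits {L : Type*} [Field L] [NumberField L] (M : Set L) : Set L :=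
  {α | α ∈ coeffRing M ∧ ∃ u : (𝓞 L)ˣ, ((u : 𝓞 L) : L) = α}

/-- The group `E_{l/k}(𝔐) = {α ∈ O_𝔐^× : Norm_{l/k}(α) ∈ Tor(O_k^×)}` of relative units. -/
def relUnits (K : Type*) [Field K] [NumberField K] (L : Type*) [Field L] [NumberField L]
    [Algebra K L] (M : Set L) : Set L :=
  {α | α ∈ coeffRingUnits M ∧ ∃ n : ℕ, 0 < n ∧ (Algebra.norm K α) ^ n = 1}

/-- A family of elements of `Lˣ` is multiplicatively independent if no nontrivial
integer-power product of them equals `1`. -/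
def MulIndep {L : Type*} [Field L] {r : ℕ} (ε : Fin r → L) : Prop :=
  ∀ m : Fin r → ℤ, (∏ j, ε j ^ m j) = 1 → m = 0

open scoped Classical in
/-- The set of infinite places of `L` lying above an infinite place `v` of `K`. -/
noncomputable def placesAbove (K : Type*) [Field K] (L : Type*) [Field L] [NumberField L]
    [Algebra K L] (v : InfinitePlace K) : Finset (InfinitePlace L) :=
  Finset.univ.filter (fun w => w.comap (algebraMap K L) = v)


/-! ### Auxiliary lemmas -/

section AuxFin
set_option linter.unusedSectionVars false

lemma finLogAbs_nonpos (F : Type*) [Field F] [NumberField F] {x : F} (hx : IsIntegral ℤ x)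
    (v : IsDedekindDomain.HeightOneSpectrum (𝓞 F)) : finLogAbs F v x ≤ 0 := by
  unfold finLogAbs
  split_ifs with h
  · exact le_refl 0
  · apply mul_nonpos_of_nonpos_of_nonneg
    · apply div_nonpos_of_nonpos_of_nonneg _ (Nat.cast_nonneg _)
      have hle : v.valuation (K := F) x ≤ 1 := by
        have := v.valuation_le_one (K := F) (⟨x, hx⟩ : 𝓞 F)
        exact this
      rw [← WithZero.coe_unzero h] at hle
      have : WithZero.unzero h ≤ 1 := by
        rwa [← WithZero.coe_one, WithZero.coe_le_coe] at hle
      have h2 : Multiplicative.toAdd (WithZero.unzero h) ≤ 0 := this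
      exact_mod_cast Int.cast_nonpos.mpr h2
    · rcases Nat.eq_zero_or_pos (Ideal.absNorm v.asIdeal) with h0 | h0
      · simp [h0]
      · exact Real.log_natCast_nonneg _

lemma weilHeight_eq_of_integral (F : Type*) [Field F] [NumberField F] {x : F}
    (hx : IsIntegral ℤ x) :
    weilHeight F x = ∑ w : InfinitePlace F, max 0 (infLogAbs F w x) := by
  unfold weilHeight
  have h0 : ∀ v : IsDedekindDomain.HeightOneSpectrum (𝓞 F), max 0 (finLogAbs F v x) = 0 :=
    fun v => max_eq_left (finLogAbs_nonpos F hx v)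
  rw [finsum_congr h0, finsum_zero, add_zero]

lemma real_eq_one_of_pow_eq_one {a : ℝ} (ha : 0 ≤ a) {n : ℕ} (hn : n ≠ 0) (h : a ^ n = 1) :
    a = 1 := by
  rcases lt_trichotomy a 1 with h1 | h1 | h1
  · nlinarith [pow_lt_one₀ ha h1 hn]
  · exact h1
  · nlinarith [one_lt_pow₀ h1 hn]

end AuxFin

section Places
open NumberField.InfinitePlace
variable {K L : Type*} [Field K] [NumberField K] [Field L] [NumberField L] [Algebra K L]

open scoped Classical in
lemma card_fiber_res (ψ : K →+* ℂ) :
    Fintype.card {φ : L →+* ℂ // φ.comp (algebraMap K L) = ψ} = finrank K L := by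
  letI := ψ.toAlgebra
  haveI : FiniteDimensional K L := Module.Finite.of_restrictScalars_finite ℚ K L
  rw [← AlgHom.card K L ℂ]
  refine (Fintype.card_congr ?_).symm
  exact { toFun := fun σ => ⟨σ.toRingHom, by ext x; exact σ.commutes x⟩
          invFun := fun φ => { toRingHom := φ.1, commutes' := fun r => RingHom.congr_fun φ.2 r }
          left_inv := fun σ => by ext; rfl
          right_inv := fun φ => by ext; rfl }

open scoped Classical in
lemma mult_eq_of_unique_above
    (hinj : Function.Injective (fun w : InfinitePlace L => w.comap (algebraMap K L)))
    (w : InfinitePlace L) :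
    mult w = mult (w.comap (algebraMap K L)) * finrank K L := by
  set v := w.comap (algebraMap K L) with hv
  rw [← card_filter_mk_eq w, ← card_filter_mk_eq v]
  rw [Finset.card_eq_sum_card_fiberwise (f := fun φ : L →+* ℂ => φ.comp (algebraMap K L))
    (t := Finset.univ.filter (fun ψ : K →+* ℂ => mk ψ = v)) (fun φ hφ => by
      simp only [Finset.mem_coe, Finset.mem_filter, Finset.mem_univ, true_and] at hφ ⊢
      rw [← comap_mk, hφ])]
  rw [Finset.sum_congr rfl (fun ψ hψ => ?_), Finset.sum_const, smul_eq_mul]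
  have : (Finset.univ.filter (fun φ : L →+* ℂ => mk φ = w)).filter
      (fun φ => φ.comp (algebraMap K L) = ψ)
      = Finset.univ.filter (fun φ : L →+* ℂ => φ.comp (algebraMap K L) = ψ) := by
    ext φ
    simp only [Finset.mem_filter, Finset.mem_univ, true_and, and_iff_right_iff_imp]
    intro hres
    simp only [Finset.mem_filter, Finset.mem_univ, true_and] at hψ
    apply hinj
    show (mk φ).comap _ = v
    rw [comap_mk, hres, hψ]
  rw [this, ← Fintype.card_subtype, card_fiber_res]

lemma comap_apply_norm_eq_pow
    (hinj : Function.Injective (fun w : InfinitePlace L => w.comap (algebraMap K L)))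
    (w : InfinitePlace L) (x : L) :
    (w.comap (algebraMap K L)) (Algebra.norm K x) = w x ^ finrank K L := by
  set v := w.comap (algebraMap K L) with hv
  letI := v.embedding.toAlgebra
  haveI : FiniteDimensional K L := Module.Finite.of_restrictScalars_finite ℚ K L
  have h1 : v (Algebra.norm K x) = ‖v.embedding (Algebra.norm K x)‖ := by
    conv_lhs => rw [← mk_embedding v, apply]
  have h2 : v.embedding (Algebra.norm K x) = ∏ σ : L →ₐ[K] ℂ, σ x := by
    have := Algebra.norm_eq_prod_embeddings (K := K) (L := L) (E := ℂ) x
    rwa [RingHom.algebraMap_toAlgebra] at this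
  have h3 : ∀ σ : L →ₐ[K] ℂ, ‖σ x‖ = w x := by
    intro σ
    have hmk : mk (σ.toRingHom) = w := by
      apply hinj
      show (mk σ.toRingHom).comap _ = v
      have hcomp : σ.toRingHom.comp (algebraMap K L) = v.embedding := by
        ext y; exact σ.commutes y
      rw [comap_mk, hcomp, mk_embedding]
    rw [← hmk, apply]
    rfl
  rw [h1, h2, norm_prod, Finset.prod_congr rfl (fun σ _ => h3 σ), Finset.prod_const,
    Finset.card_univ, AlgHom.card]

end Places

section FullMod
set_option linter.unusedSectionVars false
set_option linter.unnecessarySimpa false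
variable {K L : Type*} [Field K] [NumberField K] [Field L] [NumberField L] [Algebra K L]
variable {e : ℕ} {ω : Fin e → L}

lemma fullModule_zero : (0:L) ∈ fullModule K ω := ⟨0, by simp⟩

lemma fullModule_add {x y : L} (hx : x ∈ fullModule K ω) (hy : y ∈ fullModule K ω) :
    x + y ∈ fullModule K ω := by
  obtain ⟨ν, rfl⟩ := hx; obtain ⟨ν', rfl⟩ := hy
  exact ⟨ν + ν', by simp [map_add, add_mul, Finset.sum_add_distrib]⟩

lemma fullModule_zsmul {x : L} (n : ℤ) (hx : x ∈ fullModule K ω) :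
    n • x ∈ fullModule K ω := by
  obtain ⟨ν, rfl⟩ := hx
  refine ⟨n • ν, ?_⟩
  rw [Finset.smul_sum]
  refine Finset.sum_congr rfl (fun i _ => ?_)
  have : ((((n • ν) i : 𝓞 K)) : K) = n • ((ν i : 𝓞 K) : K) := by simp [map_zsmul]
  rw [this, map_zsmul, smul_mul_assoc]

lemma fullModule_isIntegral (hbInt : ∀ i, IsIntegral ℤ (ω i)) {x : L}
    (hx : x ∈ fullModule K ω) : IsIntegral ℤ x := by
  obtain ⟨ν, rfl⟩ := hx
  refine IsIntegral.sum _ (fun i _ => IsIntegral.mul ?_ (hbInt i))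
  exact IsIntegral.algebraMap (ν i).2

lemma exists_pow_mul_mem (b : Basis (Fin e) K L) (hbInt : ∀ i, IsIntegral ℤ (b i))
    (ε : (𝓞 L)ˣ) : ∃ m : ℕ, 0 < m ∧ ∀ x ∈ fullModule K (fun i => b i),
      ((ε : 𝓞 L) : L) ^ m * x ∈ fullModule K (fun i => b i) := by
  obtain ⟨s, hs⟩ := (Module.finite_def.mp (inferInstance : Module.Finite ℤ (𝓞 L)))
  obtain ⟨d, hd⟩ := IsLocalization.exist_integer_multiples (nonZeroDivisors (𝓞 K))
    (s ×ˢ (Finset.univ : Finset (Fin e))) (fun p => b.repr ((p.1 : 𝓞 L) : L) p.2)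
  have key : ∀ z : 𝓞 L, algebraMap K L ((d : 𝓞 K) : K) * (z : L) ∈ fullModule K (fun i => b i) := by
    intro z
    have hz : z ∈ Submodule.span ℤ (s : Set (𝓞 L)) := hs ▸ Submodule.mem_top
    induction hz using Submodule.span_induction with
    | mem z hzs =>
      have hint : ∀ i : Fin e, ∃ c : 𝓞 K,
          algebraMap (𝓞 K) K c = (d : 𝓞 K) • b.repr (z : L) i := by
        intro i
        exact hd (z, i) (Finset.mem_product.mpr ⟨hzs, Finset.mem_univ i⟩)
      choose ν hν using hint
      refine ⟨ν, ?_⟩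
      conv_lhs => rw [← Basis.sum_repr b (z : L), Finset.mul_sum]
      refine Finset.sum_congr rfl (fun i _ => ?_)
      rw [← Algebra.smul_def, smul_smul, Algebra.smul_def]
      congr 1
      rw [RingOfIntegers.coe_eq_algebraMap,
        show ((ν i : 𝓞 K) : K) = algebraMap (𝓞 K) K (ν i) from rfl, hν i, Algebra.smul_def]
    | zero => simpa using fullModule_zero
    | add x y hx hy ihx ihy =>
      have : ((x + y : 𝓞 L) : L) = (x : L) + (y : L) := map_add _ _ _
      rw [this, mul_add]; exact fullModule_add ihx ihy
    | smul n z hz ih =>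
      have : ((n • z : 𝓞 L) : L) = n • (z : L) := map_zsmul (algebraMap (𝓞 L) L) n z
      rw [this, mul_smul_comm]; exact fullModule_zsmul n ih
  set d' : 𝓞 L := algebraMap (𝓞 K) (𝓞 L) (d : 𝓞 K) with hd'
  have hd'0 : d' ≠ 0 := by
    have h0 : (d : 𝓞 K) ≠ 0 := nonZeroDivisors.coe_ne_zero d
    simpa [hd'] using fun h => h0 ((map_eq_zero_iff _
      (FaithfulSMul.algebraMap_injective (𝓞 K) (𝓞 L))).mp h)
  have hfin : Finite (𝓞 L ⧸ Ideal.span {d'}) := by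
    refine (Ideal.absNorm_ne_zero_iff _).mp ?_
    rw [Ideal.absNorm_span_singleton]
    exact Int.natAbs_ne_zero.mpr (Algebra.norm_ne_zero_iff.mpr hd'0)
  obtain ⟨i, j, hij, hije⟩ := Finite.exists_ne_map_eq_of_infinite
    (fun m : ℕ => Ideal.Quotient.mk (Ideal.span {d'}) ((ε : 𝓞 L) ^ m))
  have main : ∀ i j : ℕ, i < j →
      Ideal.Quotient.mk (Ideal.span {d'}) ((ε : 𝓞 L) ^ i) =
        Ideal.Quotient.mk (Ideal.span {d'}) ((ε : 𝓞 L) ^ j) →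
      ∃ m : ℕ, 0 < m ∧ ∀ x ∈ fullModule K (fun i => b i),
        ((ε : 𝓞 L) : L) ^ m * x ∈ fullModule K (fun i => b i) := by
    intro i j hlt heq
    have hmem : (ε : 𝓞 L) ^ j - (ε : 𝓞 L) ^ i ∈ Ideal.span {d'} := by
      have := (Ideal.Quotient.eq).mp heq
      simpa using (Ideal.span {d'}).neg_mem this
    have hmem2 : (ε : 𝓞 L) ^ (j - i) - 1 ∈ Ideal.span {d'} := by
      have hcalc : ((ε⁻¹ : (𝓞 L)ˣ) : 𝓞 L) ^ i * ((ε : 𝓞 L) ^ j - (ε : 𝓞 L) ^ i)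
          = (ε : 𝓞 L) ^ (j - i) - 1 := by
        have h1 : ((ε⁻¹ : (𝓞 L)ˣ) : 𝓞 L) * (ε : 𝓞 L) = 1 := ε.inv_mul
        have hj : (ε : 𝓞 L) ^ j = (ε : 𝓞 L) ^ i * (ε : 𝓞 L) ^ (j - i) := by
          rw [← pow_add]; congr 1; omega
        rw [mul_sub, hj, ← mul_assoc, ← mul_pow, h1, one_pow, one_mul]
      exact hcalc ▸ Ideal.mul_mem_left _ _ hmem
    obtain ⟨z₀, hz₀⟩ := Ideal.mem_span_singleton'.mp hmem2
    refine ⟨j - i, by omega, fun x hx => ?_⟩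
    have hxInt : IsIntegral ℤ x := fullModule_isIntegral hbInt hx
    set xh : 𝓞 L := ⟨x, hxInt⟩ with hxh
    have hεm : ((ε : 𝓞 L) : L) ^ (j - i) = 1 + (z₀ : L) * (d' : L) := by
      have : (ε : 𝓞 L) ^ (j - i) = 1 + z₀ * d' := by
        rw [hz₀]; ring
      calc ((ε : 𝓞 L) : L) ^ (j - i) = (((ε : 𝓞 L) ^ (j - i) : 𝓞 L) : L) := by push_cast; rfl
        _ = ((1 + z₀ * d' : 𝓞 L) : L) := by rw [← this]
        _ = 1 + (z₀ : L) * (d' : L) := by push_cast; rfl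
    rw [hεm, add_mul, one_mul]
    refine fullModule_add hx ?_
    have hdL : (d' : L) = algebraMap K L ((d : 𝓞 K) : K) := rfl
    have : (z₀ : L) * (d' : L) * x = algebraMap K L ((d : 𝓞 K) : K) * ((z₀ * xh : 𝓞 L) : L) := by
      rw [show ((z₀ * xh : 𝓞 L) : L) = (z₀ : L) * ((xh : 𝓞 L) : L) from map_mul _ _ _,
        show ((xh : 𝓞 L) : L) = x from rfl, hdL]
      ring
    rw [this]
    exact key _
  rcases lt_or_gt_of_ne hij with h | h
  · exact main i j h hije
  · exact main j i h hije.symm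

end FullMod

section Rank
variable (K L : Type*) [Field K] [NumberField K] [Field L] [NumberField L] [Algebra K L]

local instance : CommGroup (𝓞 L)ˣ := inferInstance
local instance : CommGroup (𝓞 K)ˣ := inferInstance

lemma exists_nontorsion_unit_norm_torsion
    (hcard : Fintype.card (InfinitePlace K) < Fintype.card (InfinitePlace L)) :
    ∃ ε : (𝓞 L)ˣ, ¬IsOfFinOrder ε ∧
      IsOfFinOrder (Units.map (RingOfIntegers.norm K) ε) := by
  haveI : FiniteDimensional K L := Module.Finite.of_restrictScalars_finite ℚ K L
  set φ₀ : (𝓞 L)ˣ →* (𝓞 K)ˣ := Units.map (RingOfIntegers.norm K) with hφ₀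
  have htor : NumberField.Units.torsion L ≤ (NumberField.Units.torsion K).comap φ₀ := by
    intro u hu
    exact Subgroup.mem_comap.mpr (MonoidHom.isOfFinOrder φ₀ hu)
  set q : ((𝓞 L)ˣ ⧸ NumberField.Units.torsion L) →* ((𝓞 K)ˣ ⧸ NumberField.Units.torsion K) :=
    QuotientGroup.map _ _ φ₀ htor with hq
  set g : Additive ((𝓞 L)ˣ ⧸ NumberField.Units.torsion L) →+
      Additive ((𝓞 K)ˣ ⧸ NumberField.Units.torsion K) :=
    AddMonoidHom.mk' (fun x => Additive.ofMul (q (Additive.toMul x)))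
      (fun x y => by
        show Additive.ofMul (q (Additive.toMul x * Additive.toMul y)) = _
        rw [map_mul]; rfl) with hg
  set f : Additive ((𝓞 L)ˣ ⧸ NumberField.Units.torsion L) →ₗ[ℤ]
      Additive ((𝓞 K)ˣ ⧸ NumberField.Units.torsion K) :=
    g.toIntLinearMap with hf
  haveI : Module.Finite ℤ (Additive ((𝓞 K)ˣ ⧸ NumberField.Units.torsion K)) :=
    Module.Finite.of_basis (NumberField.Units.basisModTorsion K)
  have hnotinj : ¬ Function.Injective f := by
    intro hinj
    have hle := LinearMap.finrank_le_finrank_of_injective hinj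
    rw [NumberField.Units.rank_modTorsion, NumberField.Units.rank_modTorsion] at hle
    have h1 : 0 < Fintype.card (InfinitePlace K) := Fintype.card_pos
    unfold NumberField.Units.rank at hle
    omega
  rw [Function.not_injective_iff] at hnotinj
  obtain ⟨a, b, hab, hne⟩ := hnotinj
  set x := a - b with hx
  have hx0 : x ≠ 0 := sub_ne_zero_of_ne hne
  have hfx : f x = 0 := by rw [hx, map_sub, hab, sub_self]
  obtain ⟨ε, hε⟩ := QuotientGroup.mk'_surjective (NumberField.Units.torsion L) (Additive.toMul x)
  refine ⟨ε, ?_, ?_⟩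
  · intro hfin
    apply hx0
    have : (QuotientGroup.mk' (NumberField.Units.torsion L)) ε = 1 :=
      (QuotientGroup.eq_one_iff ε).mpr hfin
    rw [this] at hε
    have : Additive.toMul x = 1 := hε.symm
    simpa using this
  · have : q (Additive.toMul x) = 1 := hfx
    rw [← hε] at this
    have h2 : (QuotientGroup.mk' (NumberField.Units.torsion K)) (φ₀ ε) = 1 := this
    exact (QuotientGroup.eq_one_iff _).mp h2

end Rank

/-- **Theorem 1.2.** Let `𝔐 ⊆ O_l` be the full `O_k`-module generated by a `k`-basis of `l`
consisting of algebraic integers, and assume the rank of the group `E_{l/k}(𝔐)` of relative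
units is zero (i.e. every relative unit is a root of unity).  If `β ≠ 0` in `O_k` and
`μ ≠ 0` in `𝔐` satisfy `Norm_{l/k}(μ) = ζβ` with `ζ ∈ Tor(O_k^×)`, then
`h(μ) = [l:k]⁻¹ h(β)`. -/
theorem height_of_solutions_of_norm_form_rank_zero
    (K L : Type*) [Field K] [NumberField K] [Field L] [NumberField L] [Algebra K L]
    (e : ℕ) (he : e = finrank K L) (b : Basis (Fin e) K L)
    (hbInt : ∀ i, IsIntegral ℤ (b i))
    (M : Set L) (hM : M = fullModule K (fun i => b i))
    -- the group `E_{l/k}(𝔐)` of relative units has rank zero, i.e. it is a torsion group: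
    (hrank : ∀ α ∈ relUnits K L M, ∃ n : ℕ, 0 < n ∧ α ^ n = 1)
    (β : K) (hβInt : IsIntegral ℤ β) (hβ : β ≠ 0)
    (μ : L) (hμM : μ ∈ M) (hμ : μ ≠ 0)
    (ζ : K) (hζ : ∃ n : ℕ, 0 < n ∧ ζ ^ n = 1)
    (hNorm : Algebra.norm K μ = ζ * β) :
    weilHeight L μ = (finrank K L : ℝ)⁻¹ * weilHeight K β := by
  classical
  haveI : FiniteDimensional K L := Module.Finite.of_restrictScalars_finite ℚ K L
  haveI : Algebra.IsAlgebraic K L := Algebra.IsAlgebraic.of_finite K L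
  subst hM
  -- Step 1: the restriction map on infinite places is bijective
  have hcard : Fintype.card (InfinitePlace L) ≤ Fintype.card (InfinitePlace K) := by
    by_contra hc
    push_neg at hc
    obtain ⟨ε, hε1, hε2⟩ := exists_nontorsion_unit_norm_torsion K L hc
    obtain ⟨m, hm, hmem⟩ := exists_pow_mul_mem b hbInt ε
    have hα : ((ε : 𝓞 L) : L) ^ m ∈ relUnits K L (fullModule K fun i => b i) := by
      refine ⟨⟨fun x hx => hmem x hx, ⟨ε ^ m, ?_⟩⟩, ?_⟩
      · rw [Units.val_pow_eq_pow_val]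
        exact map_pow (algebraMap (𝓞 L) L) _ m
      · obtain ⟨n, hn, hn1⟩ := isOfFinOrder_iff_pow_eq_one.mp hε2
        refine ⟨n, hn, ?_⟩
        have h1 : (RingOfIntegers.norm K ((ε : (𝓞 L)ˣ) : 𝓞 L)) ^ n = 1 := by
          have := congrArg (Units.val) hn1
          rw [Units.val_pow_eq_pow_val, Units.coe_map] at this
          simpa using this
        have h2 : (Algebra.norm K ((ε : 𝓞 L) : L)) ^ n = 1 := by
          have := congrArg (algebraMap (𝓞 K) K) h1
          rw [map_pow, map_one] at this
          rwa [show algebraMap (𝓞 K) K (RingOfIntegers.norm K ((ε : (𝓞 L)ˣ) : 𝓞 L))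
            = Algebra.norm K ((ε : 𝓞 L) : L) from rfl] at this
        rw [map_pow, ← pow_mul, mul_comm m n, pow_mul, h2, one_pow]
    obtain ⟨p, hp, hp1⟩ := hrank _ hα
    apply hε1
    refine isOfFinOrder_iff_pow_eq_one.mpr ⟨m * p, by positivity, ?_⟩
    have hL : ((ε : 𝓞 L) : L) ^ (m * p) = 1 := by rw [pow_mul]; exact hp1
    have h𝓞 : (ε : 𝓞 L) ^ (m * p) = 1 := by
      apply RingOfIntegers.ext
      rw [show (((ε : 𝓞 L) ^ (m * p) : 𝓞 L) : L) = ((ε : 𝓞 L) : L) ^ (m * p) from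
        map_pow (algebraMap (𝓞 L) L) _ _, hL]
      rfl
    apply Units.ext
    rw [Units.val_pow_eq_pow_val, h𝓞]
    rfl
  have hbij : Function.Bijective (fun w : InfinitePlace L => w.comap (algebraMap K L)) := by
    rw [Fintype.bijective_iff_surjective_and_card]
    exact ⟨InfinitePlace.comap_surjective,
      le_antisymm hcard (InfinitePlace.card_mono K L)⟩
  -- Step 2: the height computation
  have hμInt : IsIntegral ℤ μ := fullModule_isIntegral hbInt hμM
  have hd0 : 0 < finrank K L := finrank_pos
  have hpoint : ∀ w : InfinitePlace L, max 0 (infLogAbs L w μ)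
      = (finrank K L : ℝ)⁻¹ * max 0 (infLogAbs K (w.comap (algebraMap K L)) β) := by
    intro w
    set v := w.comap (algebraMap K L) with hv
    have hvζ : v ζ = 1 := by
      obtain ⟨n, hn, hζn⟩ := hζ
      refine real_eq_one_of_pow_eq_one (apply_nonneg v ζ) hn.ne' ?_
      rw [← map_pow, hζn, map_one]
    have hβv : v β = w μ ^ finrank K L := by
      have h1 : v (Algebra.norm K μ) = w μ ^ finrank K L := comap_apply_norm_eq_pow hbij.1 w μ
      rwa [hNorm, map_mul, hvζ, one_mul] at h1
    have hmult : InfinitePlace.mult w = InfinitePlace.mult v * finrank K L :=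
      mult_eq_of_unique_above hbij.1 w
    unfold infLogAbs
    rw [hβv, Real.log_pow, hmult]
    rw [mul_max_of_nonneg _ _ (by positivity : (0:ℝ) ≤ (finrank K L : ℝ)⁻¹), mul_zero]
    congr 1
    have hKL : (finrank ℚ K : ℝ) * (finrank K L : ℝ) = (finrank ℚ L : ℝ) := by
      exact_mod_cast congrArg (Nat.cast (R := ℝ)) (Module.finrank_mul_finrank ℚ K L)
    have hK0 : (0:ℝ) < (finrank ℚ K : ℝ) := by
      exact_mod_cast finrank_pos (R := ℚ) (M := K)
    have hKL0 : (0:ℝ) < (finrank K L : ℝ) := by exact_mod_cast hd0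
    rw [← hKL]
    push_cast
    field_simp
  rw [weilHeight_eq_of_integral L hμInt, weilHeight_eq_of_integral K hβInt]
  rw [Fintype.sum_bijective _ hbij _
    (fun v => (finrank K L : ℝ)⁻¹ * max 0 (infLogAbs K v β)) hpoint]
  rw [← Finset.mul_sum]
end

section
/- Let k ⊆ l be number fields, let ω₁, …, ω_e be a k-basis of l contained in O_l, and let 𝔐 ⊆ O_l be the full O_k-module they generate. Let O_𝔐 = {α ∈ l : α𝔐 ⊆ 𝔐}, O_𝔐^× = O_𝔐 ∩ O_l^×, and let E_{l/k}(𝔐) = {α ∈ O_𝔐^× : Norm_{l/k}(α) ∈ Tor(O_k^×)}. Then the rank of the group E_{l/k}(𝔐) equals r(l) − r(k), where r(l) and r(k) are the ranks of the unit groups O_l^× and O_k^× respectively. -/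
open NumberField Module

set_option maxSynthPendingDepth 2
set_option maxHeartbeats 1000000

section Urep
variable (F : Type*) [Field F] [NumberField F]

/-- The exponent vector of a unit with respect to a fundamental system. -/
noncomputable def urep (u : (𝓞 F)ˣ) : Fin (NumberField.Units.rank F) → ℤ :=
  ⇑((NumberField.Units.basisModTorsion F).repr
    (Additive.ofMul (QuotientGroup.mk u : (𝓞 F)ˣ ⧸ NumberField.Units.torsion F)))

variable {F}

lemma urep_mul (u v : (𝓞 F)ˣ) : urep F (u * v) = urep F u + urep F v := by
  unfold urep
  rw [QuotientGroup.mk_mul, ofMul_mul, map_add]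
  rfl

lemma urep_one : urep F (1 : (𝓞 F)ˣ) = 0 := by
  unfold urep
  rw [QuotientGroup.mk_one, ofMul_one, map_zero]
  rfl

lemma urep_zpow (u : (𝓞 F)ˣ) (k : ℤ) : urep F (u ^ k) = k • urep F u := by
  unfold urep
  rw [QuotientGroup.mk_zpow, ofMul_zpow, map_zsmul]
  rfl

lemma urep_pow (u : (𝓞 F)ˣ) (n : ℕ) : urep F (u ^ n) = (n : ℤ) • urep F u := by
  rw [← zpow_natCast, urep_zpow]

lemma urep_prod {ι : Type*} (s : Finset ι) (f : ι → (𝓞 F)ˣ) (m : ι → ℤ) :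
    urep F (∏ i ∈ s, f i ^ m i) = ∑ i ∈ s, m i • urep F (f i) := by
  classical
  induction s using Finset.induction with
  | empty => simpa using urep_one
  | insert _ _ hx ih =>
      rw [Finset.prod_insert hx, Finset.sum_insert hx, urep_mul, ih, urep_zpow]

lemma urep_eq_zero_of_pow_eq_one {u : (𝓞 F)ˣ} {n : ℕ} (hn : 0 < n) (h : u ^ n = 1) :
    urep F u = 0 := by
  have h2 : (n : ℤ) • urep F u = 0 := by rw [← urep_pow, h, urep_one]
  funext i
  have h3 := congrFun h2 i
  simp only [Pi.smul_apply, smul_eq_mul, Pi.zero_apply] at h3 ⊢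
  have hn' : (n : ℤ) ≠ 0 := by exact_mod_cast hn.ne'
  exact (mul_eq_zero.mp h3).resolve_left hn'

lemma exists_pow_eq_one_of_urep_eq_zero {u : (𝓞 F)ˣ} (h : urep F u = 0) :
    ∃ n : ℕ, 0 < n ∧ u ^ n = 1 := by
  have h1 : (NumberField.Units.basisModTorsion F).repr
      (Additive.ofMul (QuotientGroup.mk u : (𝓞 F)ˣ ⧸ NumberField.Units.torsion F)) = 0 := by
    ext i; exact congrFun h i
  have h2 : Additive.ofMul (QuotientGroup.mk u : (𝓞 F)ˣ ⧸ NumberField.Units.torsion F) = 0 :=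
    (NumberField.Units.basisModTorsion F).repr.map_eq_zero_iff.mp h1
  have h3 : (QuotientGroup.mk u : (𝓞 F)ˣ ⧸ NumberField.Units.torsion F) = 1 := h2
  have h4 : u ∈ NumberField.Units.torsion F := (QuotientGroup.eq_one_iff u).mp h3
  exact isOfFinOrder_iff_pow_eq_one.mp ((CommGroup.mem_torsion u).mp h4)

lemma urep_prod_fundSystem (m : Fin (NumberField.Units.rank F) → ℤ) :
    urep F (∏ i, NumberField.Units.fundSystem F i ^ m i) = m :=
  (NumberField.Units.fun_eq_repr (K := F)
    (x := ∏ i, NumberField.Units.fundSystem F i ^ m i) (ζ := 1) (f := m)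
    (NumberField.Units.torsion F).one_mem (by rw [one_mul])).symm

lemma urep_fundSystem (j : Fin (NumberField.Units.rank F)) :
    urep F (NumberField.Units.fundSystem F j) = Pi.single j 1 := by
  rw [← urep_prod_fundSystem (Pi.single j 1)]
  congr 1
  rw [Fintype.prod_eq_single j (fun i hi => by
    rw [Pi.single_eq_of_ne hi, zpow_zero])]
  rw [Pi.single_eq_same, zpow_one]

lemma RO_coe_pow (x : 𝓞 F) (n : ℕ) : ((x ^ n : 𝓞 F) : F) = (x : F) ^ n :=
  map_pow (algebraMap (𝓞 F) F) x n

/-- Transfer of products of units from `(𝓞 F)ˣ` to the field `F`. -/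
lemma units_prod_coe_zpow {ι : Type*} [Fintype ι] (U : ι → (𝓞 F)ˣ) (c : ι → ℤ) :
    (∏ i, (((U i : 𝓞 F) : F) ^ c i)) = (((∏ i, U i ^ c i : (𝓞 F)ˣ) : 𝓞 F) : F) := by
  let cL : (𝓞 F)ˣ →* Fˣ := Units.map (algebraMap (𝓞 F) F).toMonoidHom
  have hval : ∀ X : (𝓞 F)ˣ, ((X : 𝓞 F) : F) = ((cL X : Fˣ) : F) := fun X => rfl
  calc (∏ i, (((U i : 𝓞 F) : F) ^ c i))
      = ∏ i, (((cL (U i) ^ c i : Fˣ)) : F) := by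
        refine Finset.prod_congr rfl fun i _ => ?_
        rw [hval, Units.val_zpow_eq_zpow_val]
    _ = ((∏ i, cL (U i) ^ c i : Fˣ) : F) := by
        exact (map_prod (Units.coeHom F) (fun i => cL (U i) ^ c i) Finset.univ).symm
    _ = ((cL (∏ i, U i ^ c i) : Fˣ) : F) := by
        rw [map_prod]
        congr 1
        exact Finset.prod_congr rfl fun i _ => (map_zpow cL (U i) (c i)).symm
    _ = (((∏ i, U i ^ c i : (𝓞 F)ˣ) : 𝓞 F) : F) := rfl

lemma units_prod_coe_eq_one {ι : Type*} [Fintype ι] {U : ι → (𝓞 F)ˣ} {c : ι → ℤ}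
    (h : (∏ i, (((U i : 𝓞 F) : F) ^ c i)) = 1) : (∏ i, U i ^ c i : (𝓞 F)ˣ) = 1 := by
  rw [units_prod_coe_zpow] at h
  exact Units.ext (NumberField.RingOfIntegers.ext h)

end Urep

/-- Clearing denominators of a finite family of rationals. -/
lemma exists_int_scal {ι : Type*} [Fintype ι] (g : ι → ℚ) :
    ∃ (D : ℕ) (c : ι → ℤ), 0 < D ∧ ∀ x, (c x : ℚ) = g x * D := by
  classical
  refine ⟨∏ y, (g y).den, fun x => (g x).num * (((∏ y, (g y).den) / (g x).den : ℕ) : ℤ),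
    Finset.prod_pos (fun x _ => (g x).pos), fun x => ?_⟩
  have hdvd : (g x).den ∣ ∏ y, (g y).den := Finset.dvd_prod_of_mem _ (Finset.mem_univ x)
  have hden : ((g x).den : ℚ) ≠ 0 := Nat.cast_ne_zero.mpr (g x).den_nz
  rw [Int.cast_mul, Int.cast_natCast, Nat.cast_div hdvd hden]
  rw [eq_comm]
  nth_rewrite 1 [← Rat.num_div_den (g x)]
  field_simp

/-- Every element of a number field has a positive integer multiple which is integral. -/
lemma exists_nat_isIntegral_mul {K : Type*} [Field K] [NumberField K] (q : K) :
    ∃ n : ℕ, 0 < n ∧ IsIntegral ℤ ((n : K) * q) := by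
  have halg : IsAlgebraic ℤ q :=
    (IsFractionRing.isAlgebraic_iff ℤ ℚ K).mpr (Algebra.IsAlgebraic.isAlgebraic q)
  obtain ⟨y, hy, hyint⟩ := halg.exists_integral_multiple
  have hx : IsIntegral ℤ ((y : K) * q) := by rwa [zsmul_eq_mul] at hyint
  refine ⟨y.natAbs, Int.natAbs_pos.mpr hy, ?_⟩
  rcases Int.natAbs_eq y with h | h
  · have hcast : ((y.natAbs : ℕ) : K) = (y : K) := by
      rw [h]; exact (Int.cast_natCast _).symm
    rw [hcast]; exact hx
  · have h3 : (y.natAbs : ℤ) = -y := by omega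
    have hcast : ((y.natAbs : ℕ) : K) = -(y : K) := by
      rw [← Int.cast_natCast (R := K), h3, Int.cast_neg]
    rw [hcast, neg_mul]; exact hx.neg

section FullModule

set_option linter.unusedSectionVars false
set_option synthInstance.maxHeartbeats 400000

variable {K L : Type*} [Field K] [NumberField K] [Field L] [NumberField L] [Algebra K L]
variable {e : ℕ}

lemma ROI_coe_add (x y : 𝓞 K) : ((x + y : 𝓞 K) : K) = (x : K) + (y : K) :=
  map_add (algebraMap (𝓞 K) K) x y

lemma ROI_coe_mul (x y : 𝓞 K) : ((x * y : 𝓞 K) : K) = (x : K) * (y : K) :=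
  map_mul (algebraMap (𝓞 K) K) x y

lemma ROI_coe_intCast (k : ℤ) : (((k : 𝓞 K) : 𝓞 K) : K) = (k : K) :=
  map_intCast (algebraMap (𝓞 K) K) k

lemma ROIL_coe_add (x y : 𝓞 L) : ((x + y : 𝓞 L) : L) = (x : L) + (y : L) :=
  map_add (algebraMap (𝓞 L) L) x y

lemma ROIL_coe_mul (x y : 𝓞 L) : ((x * y : 𝓞 L) : L) = (x : L) * (y : L) :=
  map_mul (algebraMap (𝓞 L) L) x y

lemma ROIL_coe_intCast (k : ℤ) : (((k : 𝓞 L) : 𝓞 L) : L) = (k : L) :=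
  map_intCast (algebraMap (𝓞 L) L) k

lemma ROIL_coe_natCast (k : ℕ) : (((k : 𝓞 L) : 𝓞 L) : L) = (k : L) :=
  map_natCast (algebraMap (𝓞 L) L) k

lemma fm_zero (ω : Fin e → L) : (0 : L) ∈ fullModule K ω :=
  ⟨0, by simp⟩

lemma fm_add {ω : Fin e → L} {x y : L} (hx : x ∈ fullModule K ω) (hy : y ∈ fullModule K ω) :
    x + y ∈ fullModule K ω := by
  obtain ⟨ν, rfl⟩ := hx
  obtain ⟨ν', rfl⟩ := hy
  refine ⟨ν + ν', ?_⟩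
  rw [← Finset.sum_add_distrib]
  refine Finset.sum_congr rfl fun i _ => ?_
  rw [Pi.add_apply, ← add_mul, ROI_coe_add, map_add]

lemma fm_intmul {ω : Fin e → L} (k : ℤ) {x : L} (hx : x ∈ fullModule K ω) :
    (k : L) * x ∈ fullModule K ω := by
  obtain ⟨ν, rfl⟩ := hx
  refine ⟨fun i => (k : 𝓞 K) * ν i, ?_⟩
  rw [Finset.mul_sum]
  refine Finset.sum_congr rfl fun i _ => ?_
  rw [← mul_assoc, ROI_coe_mul, ROI_coe_intCast, map_mul, map_intCast]

lemma fm_natmul {ω : Fin e → L} (k : ℕ) {x : L} (hx : x ∈ fullModule K ω) :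
    (k : L) * x ∈ fullModule K ω := by
  have := fm_intmul (k : ℤ) hx
  rwa [Int.cast_natCast] at this

lemma fm_integral {ω : Fin e → L} (hω : ∀ i, IsIntegral ℤ (ω i)) {x : L}
    (hx : x ∈ fullModule K ω) : IsIntegral ℤ x := by
  obtain ⟨ν, rfl⟩ := hx
  refine IsIntegral.sum _ fun i _ => IsIntegral.mul ?_ (hω i)
  exact IsIntegral.map ((algebraMap K L).toIntAlgHom) (ν i).isIntegral_coe

lemma fm_exists_nat_mul (b : Basis (Fin e) K L) (x : L) :
    ∃ n : ℕ, 0 < n ∧ (n : L) * x ∈ fullModule K (fun i => b i) := by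
  classical
  have hch := fun i : Fin e => exists_nat_isIntegral_mul (b.repr x i)
  choose n hnpos hnint using hch
  refine ⟨∏ i, n i, Finset.prod_pos fun i _ => hnpos i, ?_⟩
  set N : ℕ := ∏ i, n i with hN
  have hint : ∀ i : Fin e, IsIntegral ℤ ((N : K) * b.repr x i) := by
    intro i
    have hdvd : n i ∣ N := Finset.dvd_prod_of_mem _ (Finset.mem_univ i)
    have hNeq : (N : K) = ((N / n i : ℕ) : K) * ((n i : ℕ) : K) := by
      rw [← Nat.cast_mul, Nat.div_mul_cancel hdvd]
    rw [hNeq, mul_assoc]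
    refine IsIntegral.mul ?_ (hnint i)
    have : ((N / n i : ℕ) : K) = algebraMap ℤ K ((N / n i : ℕ) : ℤ) :=
      (Int.cast_natCast _).symm
    rw [this]
    exact isIntegral_algebraMap
  refine ⟨fun i => ⟨(N : K) * b.repr x i, hint i⟩, ?_⟩
  conv_lhs => rw [← b.sum_repr x]
  rw [Finset.mul_sum]
  refine Finset.sum_congr rfl fun i _ => ?_
  show _ = algebraMap K L ((N : K) * b.repr x i) * b i
  simp [NumberField.RingOfIntegers.coe_mk, Algebra.smul_def, mul_assoc]

lemma fm_exists_N (b : Basis (Fin e) K L) :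
    ∃ N : ℕ, 0 < N ∧ ∀ x : 𝓞 L, (N : L) * (x : L) ∈ fullModule K (fun i => b i) := by
  classical
  obtain ⟨s, hs⟩ := Module.Finite.fg_top (R := ℤ) (M := 𝓞 L)
  have hch := fun y : 𝓞 L => fm_exists_nat_mul b (y : L)
  choose n hnpos hnmem using hch
  refine ⟨∏ y ∈ s, n y, Finset.prod_pos fun y _ => hnpos y, fun x => ?_⟩
  set N : ℕ := ∏ y ∈ s, n y with hNdef
  have hx : x ∈ Submodule.span ℤ (s : Set (𝓞 L)) := by rw [hs]; trivial
  refine Submodule.span_induction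
    (p := fun (z : 𝓞 L) (_ : z ∈ Submodule.span ℤ (s : Set (𝓞 L))) => (N : L) * (z : L) ∈ fullModule K (fun i => b i))
    (fun y hy => ?_) (by simpa using fm_zero (fun i => b i)) (fun z w _ _ hz hw => ?_)
    (fun k z _ hz => ?_) hx
  · -- generator case
    show (N : L) * (y : L) ∈ fullModule K (fun i => b i)
    have hdvd : n y ∣ N := Finset.dvd_prod_of_mem _ hy
    have hNeq : (N : L) = ((N / n y : ℕ) : L) * ((n y : ℕ) : L) := by
      rw [← Nat.cast_mul, Nat.div_mul_cancel hdvd]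
    rw [hNeq, mul_assoc]
    exact fm_natmul _ (hnmem y)
  · -- add case
    show (N : L) * ((z + w : 𝓞 L) : L) ∈ fullModule K (fun i => b i)
    have : (N : L) * ((z + w : 𝓞 L) : L) = (N : L) * (z : L) + (N : L) * (w : L) := by
      rw [ROIL_coe_add]; ring
    rw [this]
    exact fm_add hz hw
  · -- smul case
    show (N : L) * ((k • z : 𝓞 L) : L) ∈ fullModule K (fun i => b i)
    have : (N : L) * ((k • z : 𝓞 L) : L) = (k : L) * ((N : L) * (z : L)) := by
      rw [zsmul_eq_mul, ROIL_coe_mul, ROIL_coe_intCast]; ring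
    rw [this]
    exact fm_intmul k hz

lemma fm_unit_pow (b : Basis (Fin e) K L) (hbInt : ∀ i, IsIntegral ℤ (b i)) (U : (𝓞 L)ˣ) :
    ∃ t : ℕ, 0 < t ∧ (((U ^ t : (𝓞 L)ˣ) : 𝓞 L) : L) ∈ coeffRing (fullModule K (fun i => b i)) := by
  obtain ⟨N, hNpos, hN⟩ := fm_exists_N b
  set I : Ideal (𝓞 L) := Ideal.span {(N : 𝓞 L)} with hIdef
  have hI : I ≠ ⊥ := by
    rw [hIdef, Ne, Ideal.span_singleton_eq_bot]
    exact_mod_cast hNpos.ne'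
  haveI : Finite ((𝓞 L) ⧸ I) := Ideal.finiteQuotientOfFreeOfNeBot I hI
  haveI : Finite (((𝓞 L) ⧸ I)ˣ) := inferInstance
  set Ub : ((𝓞 L) ⧸ I)ˣ := Units.map (Ideal.Quotient.mk I).toMonoidHom U with hUb
  refine ⟨orderOf Ub, orderOf_pos Ub, ?_⟩
  have hUb1 : Ub ^ orderOf Ub = 1 := pow_orderOf_eq_one Ub
  have hq : Ideal.Quotient.mk I ((U ^ orderOf Ub : (𝓞 L)ˣ) : 𝓞 L) = 1 := by
    have h2 : (Units.map (Ideal.Quotient.mk I).toMonoidHom) (U ^ orderOf Ub) = 1 := by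
      rw [map_pow]; exact hUb1
    have h3 := congrArg Units.val h2
    simpa using h3
  have hmem : ((U ^ orderOf Ub : (𝓞 L)ˣ) : 𝓞 L) - 1 ∈ I := by
    rw [← Ideal.Quotient.eq_zero_iff_mem, map_sub, hq, map_one, sub_self]
  obtain ⟨β, hβ⟩ := Ideal.mem_span_singleton'.mp hmem
  have hpow : ((U ^ orderOf Ub : (𝓞 L)ˣ) : 𝓞 L) = 1 + β * (N : 𝓞 L) := by
    linear_combination -hβ
  intro x hx
  -- x ∈ fullModule, show (U^t : L) * x ∈ fullModule
  have hxint : IsIntegral ℤ x := fm_integral hbInt hx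
  set x' : 𝓞 L := ⟨x, hxint⟩ with hx'def
  have hxx' : (x' : L) = x := rfl
  have key : (((U ^ orderOf Ub : (𝓞 L)ˣ) : 𝓞 L) : L) * x
      = x + (N : L) * ((β * x' : 𝓞 L) : L) := by
    rw [hpow, ROIL_coe_add, ROIL_coe_mul, ROIL_coe_mul, ROIL_coe_natCast]
    rw [show (((1 : 𝓞 L)) : L) = 1 from map_one (algebraMap (𝓞 L) L), hxx']
    ring
  rw [key]
  exact fm_add hx (hN (β * x'))

end FullModule

/-- **Lemma 2.1.** Let `𝔐 ⊆ O_l` be the full `O_k`-module generated by a `k`-basis of `l`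
consisting of algebraic integers, and let `E_{l/k}(𝔐)` be its group of relative units.
Then the rank of `E_{l/k}(𝔐)` equals `r(l) − r(k)`: there is a multiplicatively
independent family of `r(l) − r(k)` elements of `E_{l/k}(𝔐)`, and every family of
`r(l) − r(k) + 1` elements of `E_{l/k}(𝔐)` is multiplicatively dependent. -/
theorem rank_relUnits_eq
    (K L : Type*) [Field K] [NumberField K] [Field L] [NumberField L] [Algebra K L]
    (e : ℕ) (he : e = finrank K L) (b : Basis (Fin e) K L)
    (hbInt : ∀ i, IsIntegral ℤ (b i))
    (M : Set L) (hM : M = fullModule K (fun i => b i)) :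
    (∃ ε : Fin (Units.rank L - Units.rank K) → L,
        (∀ j, ε j ∈ relUnits K L M) ∧ MulIndep ε) ∧
      ∀ η : Fin (Units.rank L - Units.rank K + 1) → L,
        (∀ i, η i ∈ relUnits K L M) → ¬ MulIndep η := by
  classical
  subst hM
  haveI : Module.Finite K L := Module.Finite.of_basis b
  have hd : 0 < finrank K L := finrank_pos
  set NU : (𝓞 L)ˣ →* (𝓞 K)ˣ := Units.map (RingOfIntegers.norm K) with hNUdef
  have hNUval : ∀ (X : (𝓞 L)ˣ) (nn : ℕ),
      (((X ^ nn : (𝓞 L)ˣ) : 𝓞 L) : L) = (((X : 𝓞 L) : L)) ^ nn := by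
    intro X nn
    rw [Units.val_pow_eq_pow_val, RO_coe_pow]
  have hNUcoe : ∀ X : (𝓞 L)ˣ, (((NU X : (𝓞 K)ˣ) : 𝓞 K) : K) = Algebra.norm K ((X : 𝓞 L) : L) :=
    fun X => rfl
  have normUnitTors : ∀ (X : (𝓞 L)ˣ) (n : ℕ), 0 < n →
      (Algebra.norm K ((X : 𝓞 L) : L)) ^ n = 1 → urep K (NU X) = 0 := by
    intro X n hn h
    refine urep_eq_zero_of_pow_eq_one hn (Units.ext (NumberField.RingOfIntegers.ext ?_))
    rw [Units.val_pow_eq_pow_val, RO_coe_pow, hNUcoe X, h]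
    simp
  constructor
  · -- Part 1: existence of r_L - r_K independent relative units
    set A : Fin (Units.rank L) → Fin (Units.rank K) → ℤ :=
      fun i => urep K (NU (NumberField.Units.fundSystem L i)) with hAdef
    set B : Matrix (Fin (Units.rank K)) (Fin (Units.rank L)) ℚ :=
      Matrix.of fun j i => (A i j : ℚ) with hBdef
    set ψ := B.mulVecLin with hψdef
    have hker : Units.rank L - Units.rank K ≤ finrank ℚ (LinearMap.ker ψ) := by
      have h1 := LinearMap.finrank_range_add_finrank_ker ψ
      have h2 : finrank ℚ (LinearMap.range ψ) ≤ Units.rank K :=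
        le_trans (Submodule.finrank_le _)
          (le_of_eq (by rw [Module.finrank_pi, Fintype.card_fin]))
      rw [Module.finrank_pi, Fintype.card_fin] at h1
      omega
    set bk := Module.finBasis ℚ (LinearMap.ker ψ) with hbkdef
    set v : Fin (Units.rank L - Units.rank K) → (Fin (Units.rank L) → ℚ) :=
      fun j => ((bk (Fin.castLE hker j)) : Fin (Units.rank L) → ℚ) with hvdef
    have hvker : ∀ j, ψ (v j) = 0 := fun j => LinearMap.mem_ker.mp (bk (Fin.castLE hker j)).2
    have hvind : ∀ g : Fin (Units.rank L - Units.rank K) → ℚ,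
        (∑ j, g j • v j) = 0 → ∀ j, g j = 0 := by
      have li2 : LinearIndependent ℚ v :=
        ((bk.linearIndependent.comp (Fin.castLE hker) (Fin.castLE_injective hker)).map'
          (LinearMap.ker ψ).subtype (Submodule.ker_subtype _))
      exact Fintype.linearIndependent_iff.mp li2
    choose D m hD hm using fun j => exists_int_scal (v j)
    have hmker : ∀ j j', (∑ i, m j i * A i j') = 0 := by
      intro j j'
      have h0 := congrFun (hvker j) j'
      have h1 : (∑ i, (A i j' : ℚ) * v j i) = 0 := by
        simpa [hψdef, hBdef, Matrix.mulVecLin_apply, Matrix.mulVec, dotProduct] using h0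
      have h2 : ((∑ i, m j i * A i j' : ℤ) : ℚ) = (∑ i, (A i j' : ℚ) * v j i) * (D j) := by
        push_cast
        rw [Finset.sum_mul]
        refine Finset.sum_congr rfl fun i _ => ?_
        rw [hm j i]
        ring
      rw [h1, zero_mul] at h2
      exact_mod_cast h2
    set ε0 : Fin (Units.rank L - Units.rank K) → (𝓞 L)ˣ :=
      fun j => ∏ i, NumberField.Units.fundSystem L i ^ m j i with hε0def
    have hrepε0 : ∀ j, urep L (ε0 j) = m j := fun j => urep_prod_fundSystem (m j)
    have hNUrep : ∀ j, urep K (NU (ε0 j)) = 0 := by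
      intro j
      have h1 : NU (ε0 j) = ∏ i, NU (NumberField.Units.fundSystem L i) ^ m j i := by
        rw [hε0def, map_prod]
        exact Finset.prod_congr rfl fun i _ => map_zpow NU _ _
      rw [h1, urep_prod]
      funext j'
      have h2 := hmker j j'
      simp only [Finset.sum_apply, Pi.smul_apply, smul_eq_mul, Pi.zero_apply]
      rw [← h2]
    have htors : ∀ j, ∃ n : ℕ, 0 < n ∧ (NU (ε0 j)) ^ n = 1 :=
      fun j => exists_pow_eq_one_of_urep_eq_zero (hNUrep j)
    choose nt hnt hNt using htors
    choose t ht htc using fun j => fm_unit_pow b hbInt (ε0 j)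
    refine ⟨fun j => (((ε0 j ^ t j : (𝓞 L)ˣ) : 𝓞 L) : L), fun j => ?_, ?_⟩
    · refine ⟨⟨htc j, ⟨ε0 j ^ t j, rfl⟩⟩, nt j, hnt j, ?_⟩
      have h1 : (NU (ε0 j ^ t j)) ^ (nt j) = 1 := by
        rw [map_pow, ← pow_mul, mul_comm, pow_mul, hNt j, one_pow]
      have h2 := congrArg (fun X : (𝓞 K)ˣ => (((X : (𝓞 K)ˣ) : 𝓞 K) : K)) h1
      rw [Units.val_pow_eq_pow_val, RO_coe_pow, hNUcoe _] at h2
      simpa using h2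
    · intro c hc
      have hc' : (∏ j, (ε0 j ^ t j) ^ c j : (𝓞 L)ˣ) = 1 := units_prod_coe_eq_one hc
      have h3 : (∑ j, c j • urep L (ε0 j ^ t j)) = 0 := by
        rw [← urep_prod, hc', urep_one]
      have h4 : ∀ j, urep L (ε0 j ^ t j) = (t j : ℤ) • m j := by
        intro j; rw [urep_pow, hrepε0]
      simp only [h4] at h3
      have h6 : (∑ j, ((c j : ℚ) * (t j : ℚ) * (D j : ℚ)) • v j) = 0 := by
        funext i
        have h7 := congrFun h3 i
        simp only [Finset.sum_apply, Pi.smul_apply, smul_eq_mul, Pi.zero_apply] at h7 ⊢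
        have h8 : ((∑ j, c j * ((t j : ℤ) * m j i) : ℤ) : ℚ) = 0 := by
          rw [h7]; rfl
        push_cast at h8
        rw [← h8]
        refine Finset.sum_congr rfl fun j _ => ?_
        rw [hm j i]
        ring
      have h5 := hvind _ h6
      funext j
      have h9 := h5 j
      have hDne : (D j : ℚ) ≠ 0 := by exact_mod_cast (hD j).ne'
      have htne : (t j : ℚ) ≠ 0 := by exact_mod_cast (ht j).ne'
      have : (c j : ℚ) = 0 := by
        rcases mul_eq_zero.mp h9 with h | h
        · rcases mul_eq_zero.mp h with h' | h'
          · exact h'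
          · exact absurd h' htne
        · exact absurd h hDne
      exact_mod_cast this
  · -- Part 2: any r_L - r_K + 1 relative units are dependent
    intro η hη hind
    choose u hu using fun i => (hη i).1.2
    choose n hnpos hn1 using fun i => (hη i).2
    have hrepNUu : ∀ i, urep K (NU (u i)) = 0 := by
      intro i
      refine normUnitTors (u i) (n i) (hnpos i) ?_
      rw [hu i]
      exact hn1 i
    set w : Fin (Units.rank K) → (𝓞 L)ˣ :=
      fun j => Units.map (algebraMap (𝓞 K) (𝓞 L)).toMonoidHom (NumberField.Units.fundSystem K j)
      with hwdef
    have hNUw : ∀ j, NU (w j) = NumberField.Units.fundSystem K j ^ finrank K L := by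
      intro j
      refine Units.ext ?_
      show RingOfIntegers.norm K
        (algebraMap (𝓞 K) (𝓞 L) ((NumberField.Units.fundSystem K j : (𝓞 K)ˣ) : 𝓞 K)) = _
      rw [RingOfIntegers.norm_algebraMap]
      exact (Units.val_pow_eq_pow_val _ _).symm
    set W : (Fin (Units.rank L - Units.rank K + 1) ⊕ Fin (Units.rank K)) →
        (Fin (Units.rank L) → ℤ) :=
      Sum.elim (fun i => urep L (u i)) (fun j => urep L (w j)) with hWdef
    have hnli : ¬ LinearIndependent ℚ (fun x => fun i => ((W x i : ℤ) : ℚ)) := by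
      intro hli
      have hcard := hli.fintype_card_le_finrank
      rw [Module.finrank_pi, Fintype.card_fin, Fintype.card_sum, Fintype.card_fin,
        Fintype.card_fin] at hcard
      omega
    obtain ⟨g, hg, x₀, hx₀⟩ := Fintype.not_linearIndependent_iff.mp hnli
    obtain ⟨D, c, hD, hc⟩ := exists_int_scal g
    have hcW : (∑ x, c x • W x) = 0 := by
      funext i
      have h1 := congrFun hg i
      simp only [Finset.sum_apply, Pi.smul_apply, smul_eq_mul, Pi.zero_apply] at h1 ⊢
      have h2 : ((∑ x, c x * W x i : ℤ) : ℚ) = (∑ x, g x * ((W x i : ℤ) : ℚ)) * D := by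
        push_cast
        rw [Finset.sum_mul]
        exact Finset.sum_congr rfl fun x _ => by rw [hc x]; ring
      rw [h1, zero_mul] at h2
      exact_mod_cast h2
    have hcx₀ : c x₀ ≠ 0 := by
      intro h0
      have h1 := hc x₀
      rw [h0] at h1
      have hD' : (D : ℚ) ≠ 0 := by exact_mod_cast hD.ne'
      refine hx₀ ?_
      have := (mul_eq_zero.mp h1.symm).resolve_right hD'
      exact this
    set P : (𝓞 L)ˣ := (∏ i, u i ^ c (Sum.inl i)) * (∏ j, w j ^ c (Sum.inr j)) with hPdef
    have hrepP : urep L P = 0 := by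
      rw [hPdef, urep_mul, urep_prod, urep_prod]
      have := hcW
      rw [Fintype.sum_sum_type] at this
      exact this
    obtain ⟨T, hT, hPT⟩ := exists_pow_eq_one_of_urep_eq_zero hrepP
    have hNUP : (NU P) ^ T = 1 := by rw [← map_pow, hPT, map_one]
    have hrepNUP : urep K (NU P) = 0 := urep_eq_zero_of_pow_eq_one hT hNUP
    have hcinr : ∀ j, c (Sum.inr j) = 0 := by
      intro j'
      have h1 : NU P = (∏ i, NU (u i) ^ c (Sum.inl i)) *
          (∏ j, (NumberField.Units.fundSystem K j ^ finrank K L) ^ c (Sum.inr j)) := by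
        rw [hPdef, map_mul, map_prod, map_prod]
        congr 1
        · exact Finset.prod_congr rfl fun i _ => map_zpow NU _ _
        · exact Finset.prod_congr rfl fun j _ => by rw [map_zpow, hNUw j]
      have h2 : urep K (NU P) =
          ∑ j, c (Sum.inr j) • ((finrank K L : ℤ) • (Pi.single j 1 : Fin (Units.rank K) → ℤ)) := by
        rw [h1, urep_mul, urep_prod, urep_prod]
        have hz : (∑ i, c (Sum.inl i) • urep K (NU (u i))) = 0 :=
          Finset.sum_eq_zero fun i _ => by rw [hrepNUu i, smul_zero]
        rw [hz, zero_add]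
        refine Finset.sum_congr rfl fun j _ => ?_
        rw [urep_pow, urep_fundSystem]
      rw [hrepNUP] at h2
      have h3 := congrFun h2.symm j'
      simp only [Finset.sum_apply, Pi.smul_apply, smul_eq_mul, Pi.zero_apply, Pi.single_apply,
        mul_ite, mul_one, mul_zero, Finset.sum_ite_eq, Finset.sum_ite_eq', Finset.mem_univ,
        if_true] at h3
      have hdz : (finrank K L : ℤ) ≠ 0 := by exact_mod_cast hd.ne'
      exact (mul_eq_zero.mp h3).resolve_right hdz
    obtain ⟨i₀, hci₀⟩ : ∃ i₀, c (Sum.inl i₀) ≠ 0 := by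
      cases x₀ with
      | inl i₀ => exact ⟨i₀, hcx₀⟩
      | inr j₀ => exact absurd (hcinr j₀) hcx₀
    have hPu : P = ∏ i, u i ^ c (Sum.inl i) := by
      have hw1 : (∏ j, w j ^ c (Sum.inr j)) = 1 :=
        Finset.prod_eq_one fun j _ => by rw [hcinr j, zpow_zero]
      rw [hPdef, hw1, mul_one]
    have hfin : (∏ i, u i ^ (c (Sum.inl i) * T)) = 1 := by
      have h1 : ∏ i, u i ^ (c (Sum.inl i) * (T : ℤ)) = (∏ i, u i ^ c (Sum.inl i)) ^ (T : ℤ) := by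
        rw [← Finset.prod_zpow]
        exact Finset.prod_congr rfl fun i _ => by rw [← zpow_mul]
      rw [h1, ← hPu, zpow_natCast, hPT]
    have hfield : (∏ i, η i ^ (c (Sum.inl i) * (T : ℤ))) = 1 := by
      have h1 : (∏ i, (((u i : 𝓞 L) : L)) ^ (c (Sum.inl i) * (T : ℤ))) = 1 := by
        rw [units_prod_coe_zpow, hfin]
        simp
      rw [← h1]
      exact Finset.prod_congr rfl fun i _ => by rw [hu i]
    have hzero := hind _ hfield
    have h4 := congrFun hzero i₀
    simp only [Pi.zero_apply, mul_eq_zero] at h4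
    rcases h4 with h | h
    · exact hci₀ h
    · exact absurd h (by exact_mod_cast hT.ne')
end

section
/- Let k ⊆ l be number fields, 𝔐 ⊆ O_l a full O_k-module generated by a k-basis of l, and E_{l/k}(𝔐) its group of relative units, of rank r(l/k) = r(l) − r(k). Let ε₁, …, ε_{r(l/k)} be multiplicatively independent elements of E_{l/k}(𝔐), and let 𝔈 be the subgroup they generate. If μ ∈ l^×, then there exists γ ∈ 𝔈 such that ∑_{v|∞} ∑_{w|v} | log|γμ|_w − |W_v(l/k)|^{-1} ∑_{x|v} log|γμ|_x | ≤ ∑_{j=1}^{r(l/k)} h(ε_j), where the outer sum runs over the archimedean places v of k, the sums over w and x run over the places of l above v, and |W_v(l/k)| is the number of places of l above v. -/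
open NumberField Module

section Lemma32Aux

open NumberField.InfinitePlace

open scoped Classical in
lemma Lemma32.card_lift (K L : Type*) [Field K] [Field L] [NumberField L] [Algebra K L]
    (v : InfinitePlace K) (w : InfinitePlace L) :
    (Finset.univ.filter (fun ψ : L →+* ℂ =>
        InfinitePlace.mk ψ = w ∧ ψ.comp (algebraMap K L) = v.embedding)).card * v.mult
      = if w.comap (algebraMap K L) = v then w.mult else 0 := by
  have hstst : ∀ χ : K →+* ℂ, ComplexEmbedding.conjugate (ComplexEmbedding.conjugate χ) = χ :=
    fun χ => RingHom.ext fun t => by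
      simp [ComplexEmbedding.conjugate_coe_eq]
  have hconjcomp : ∀ ψ : L →+* ℂ,
      (ComplexEmbedding.conjugate ψ).comp (algebraMap K L)
        = ComplexEmbedding.conjugate (ψ.comp (algebraMap K L)) := fun ψ => RingHom.ext fun _ => rfl
  by_cases hwv : w.comap (algebraMap K L) = v
  · by_cases hv : v.IsReal
    · have hsub : ∀ ψ : L →+* ℂ, InfinitePlace.mk ψ = w →
          ψ.comp (algebraMap K L) = v.embedding := by
        intro ψ hψ
        have h1 : InfinitePlace.mk (ψ.comp (algebraMap K L)) = InfinitePlace.mk v.embedding := by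
          rw [← comap_mk, hψ, hwv, mk_embedding]
        rcases mk_eq_iff.mp h1 with h | h
        · exact h
        · have hre : ComplexEmbedding.conjugate v.embedding = v.embedding :=
            ComplexEmbedding.isReal_iff.mp (isReal_iff.mp hv)
          calc ψ.comp (algebraMap K L)
              = ComplexEmbedding.conjugate (ComplexEmbedding.conjugate (ψ.comp (algebraMap K L))) :=
                (hstst _).symm
            _ = ComplexEmbedding.conjugate v.embedding := by rw [h]
            _ = v.embedding := hre
      have hfil : (Finset.univ.filter (fun ψ : L →+* ℂ =>
          InfinitePlace.mk ψ = w ∧ ψ.comp (algebraMap K L) = v.embedding))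
          = Finset.univ.filter (fun ψ : L →+* ℂ => InfinitePlace.mk ψ = w) := by
        apply Finset.filter_congr
        intro ψ _
        simp only [and_iff_left_iff_imp]
        exact hsub ψ
      rw [hfil, card_filter_mk_eq, if_pos hwv,
        show v.mult = 1 from by rw [InfinitePlace.mult, if_pos hv], mul_one]
    · have hw : ¬ w.IsReal := fun h => hv (hwv ▸ h.comap (algebraMap K L))
      have hconjv : ComplexEmbedding.conjugate v.embedding ≠ v.embedding := by
        intro h
        exact hv (isReal_iff.mpr (ComplexEmbedding.isReal_iff.mpr h))
      have h1 : InfinitePlace.mk (w.embedding.comp (algebraMap K L))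
          = InfinitePlace.mk v.embedding := by
        rw [← comap_mk, mk_embedding, hwv, mk_embedding]
      have hcard1 : (Finset.univ.filter (fun ψ : L →+* ℂ =>
          InfinitePlace.mk ψ = w ∧ ψ.comp (algebraMap K L) = v.embedding)).card = 1 := by
        rcases mk_eq_iff.mp h1 with hA | hB
        · rw [show (Finset.univ.filter (fun ψ : L →+* ℂ =>
              InfinitePlace.mk ψ = w ∧ ψ.comp (algebraMap K L) = v.embedding)) = {w.embedding} from ?_,
            Finset.card_singleton]
          ext ψ
          simp only [Finset.mem_filter, Finset.mem_univ, true_and, Finset.mem_singleton]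
          constructor
          · rintro ⟨hmk, hcomp⟩
            rw [← mk_embedding w] at hmk
            rcases mk_eq_iff.mp hmk.symm with h | h
            · exact h.symm
            · exfalso
              rw [← h, hconjcomp, hA] at hcomp
              exact hconjv hcomp
          · rintro rfl
            exact ⟨mk_embedding w, hA⟩
        · rw [show (Finset.univ.filter (fun ψ : L →+* ℂ =>
              InfinitePlace.mk ψ = w ∧ ψ.comp (algebraMap K L) = v.embedding))
              = {ComplexEmbedding.conjugate w.embedding} from ?_, Finset.card_singleton]
          ext ψ
          simp only [Finset.mem_filter, Finset.mem_univ, true_and, Finset.mem_singleton]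
          constructor
          · rintro ⟨hmk, hcomp⟩
            rw [← mk_embedding w] at hmk
            rcases mk_eq_iff.mp hmk.symm with h | h
            · exfalso
              rw [← h] at hcomp
              rw [hcomp] at hB
              exact hconjv hB
            · exact h.symm
          · rintro rfl
            constructor
            · rw [mk_conjugate_eq, mk_embedding]
            · rw [hconjcomp, hB]
      rw [hcard1, one_mul, if_pos hwv,
        show v.mult = 2 from by rw [InfinitePlace.mult, if_neg hv],
        show w.mult = 2 from by rw [InfinitePlace.mult, if_neg hw]]
  · rw [if_neg hwv]
    convert zero_mul v.mult
    rw [Finset.card_eq_zero]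
    ext ψ
    simp only [Finset.mem_filter, Finset.mem_univ, true_and, Finset.notMem_empty, iff_false,
      not_and]
    intro hmk hcomp
    apply hwv
    rw [← hmk, comap_mk, hcomp, mk_embedding]

open scoped Classical in
lemma Lemma32.prod_placesAbove (K L : Type*) [Field K] [NumberField K] [Field L] [NumberField L]
    [Algebra K L] (v : InfinitePlace K) (x : L) :
    ∏ w ∈ placesAbove K L v, (w x) ^ w.mult = (v ((Algebra.norm K) x)) ^ v.mult := by
  letI : Algebra K ℂ := v.embedding.toAlgebra
  have halg : algebraMap K ℂ = v.embedding := rfl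
  have hnorm : (v ((Algebra.norm K) x)) = ∏ σ : L →ₐ[K] ℂ, ‖σ x‖ := by
    have h1 := Algebra.norm_eq_prod_embeddings K ℂ x
    have h2 : v ((Algebra.norm K) x) = ‖v.embedding ((Algebra.norm K) x)‖ := by
      conv_lhs => rw [← mk_embedding v, InfinitePlace.apply]
    rw [h2, ← halg, h1, norm_prod]
  have hinner : ∀ w : InfinitePlace L,
      (∏ σ ∈ Finset.univ.filter
          (fun σ : L →ₐ[K] ℂ => InfinitePlace.mk (σ : L →+* ℂ) = w), ‖σ x‖)
        = (w x) ^ (Finset.univ.filter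
            (fun σ : L →ₐ[K] ℂ => InfinitePlace.mk (σ : L →+* ℂ) = w)).card := by
    intro w
    rw [Finset.prod_congr rfl (fun σ hσ => ?_), Finset.prod_const]
    rw [← (Finset.mem_filter.mp hσ).2, InfinitePlace.apply]
    rfl
  have hcard : ∀ w : InfinitePlace L,
      (Finset.univ.filter (fun σ : L →ₐ[K] ℂ => InfinitePlace.mk (σ : L →+* ℂ) = w)).card
        = (Finset.univ.filter (fun ψ : L →+* ℂ =>
            InfinitePlace.mk ψ = w ∧ ψ.comp (algebraMap K L) = v.embedding)).card := by
    intro w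
    refine Finset.card_bij (fun (σ : L →ₐ[K] ℂ) _ => (σ : L →+* ℂ)) ?_ ?_ ?_
    · intro σ hσ
      rw [Finset.mem_filter] at hσ ⊢
      exact ⟨Finset.mem_univ _, hσ.2, by rw [AlgHom.comp_algebraMap, halg]⟩
    · intro a _ b _ hab
      exact AlgHom.coe_ringHom_injective hab
    · intro ψ hψ
      rw [Finset.mem_filter] at hψ
      refine ⟨AlgHom.mk ψ (fun r => ?_), ?_, rfl⟩
      · rw [show (algebraMap K ℂ) r = v.embedding r from rfl, ← hψ.2.2]
        rfl
      · rw [Finset.mem_filter]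
        exact ⟨Finset.mem_univ _, hψ.2.1⟩
  have hfib := Finset.prod_fiberwise (Finset.univ : Finset (L →ₐ[K] ℂ))
      (fun σ => InfinitePlace.mk (σ : L →+* ℂ)) (fun σ => ‖σ x‖)
  calc ∏ w ∈ placesAbove K L v, (w x) ^ w.mult
      = ∏ w : InfinitePlace L, (w x) ^ (if w.comap (algebraMap K L) = v then w.mult else 0) := by
        rw [placesAbove, Finset.prod_filter]
        exact Finset.prod_congr rfl (fun w _ => by split_ifs <;> simp
        )
    _ = ∏ w : InfinitePlace L, ((w x) ^ (Finset.univ.filter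
          (fun σ : L →ₐ[K] ℂ => InfinitePlace.mk (σ : L →+* ℂ) = w)).card) ^ v.mult := by
        refine Finset.prod_congr rfl (fun w _ => ?_)
        rw [← pow_mul]
        congr 1
        rw [hcard w, Lemma32.card_lift K L v w]
    _ = (∏ w : InfinitePlace L, (w x) ^ (Finset.univ.filter
          (fun σ : L →ₐ[K] ℂ => InfinitePlace.mk (σ : L →+* ℂ) = w)).card) ^ v.mult := by
        rw [← Finset.prod_pow]
    _ = (∏ σ : L →ₐ[K] ℂ, ‖σ x‖) ^ v.mult := by
        rw [← hfib]
        exact congrArg (· ^ v.mult) (Finset.prod_congr rfl (fun w _ => (hinner w).symm))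
    _ = (v ((Algebra.norm K) x)) ^ v.mult := by rw [hnorm]




section A1
open NumberField Module Submodule
lemma Lemma32.discrete_of_ci {X Y : Type*} [TopologicalSpace X] [TopologicalSpace Y]
    [DiscreteTopology Y] {f : X → Y} (hc : Continuous f) (hi : Function.Injective f) :
    DiscreteTopology X := by
  refine discreteTopology_iff_isOpen_singleton.mpr fun x => ?_
  have h : ({x} : Set X) = f ⁻¹' {f x} := by
    ext y; simp [hi.eq_iff]
  rw [h]
  exact (isOpen_discrete _).preimage hc

lemma Lemma32.linearIndependent_real_of_int {V : Type*} [NormedAddCommGroup V] [NormedSpace ℝ V]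
    [FiniteDimensional ℝ V] {r : ℕ} {f : Fin r → V}
    (hd : DiscreteTopology (span ℤ (Set.range f)))
    (hli : LinearIndependent ℤ f) : LinearIndependent ℝ f := by
  classical
  set S : Submodule ℝ V := span ℝ (Set.range f) with hS
  have hmemS : ∀ j, f j ∈ S := fun j => subset_span (Set.mem_range_self j)
  set g : Fin r → S := fun j => ⟨f j, hmemS j⟩ with hgdef
  have hlig : LinearIndependent ℤ g :=
    LinearIndependent.of_comp ((S.subtype).restrictScalars ℤ) hli
  set L : Submodule ℤ S := span ℤ (Set.range g) with hL
  have hLsub : ∀ x : L, ((x : S) : V) ∈ span ℤ (Set.range f) := by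
    intro x
    have hle : L ≤ Submodule.comap ((S.subtype).restrictScalars ℤ) (span ℤ (Set.range f)) := by
      rw [hL, span_le]
      rintro _ ⟨j, rfl⟩
      exact subset_span (Set.mem_range_self j)
    exact hle x.2
  have hLd : DiscreteTopology L := by
    refine Lemma32.discrete_of_ci
      (f := fun x : L => (⟨(x : S), hLsub x⟩ : span ℤ (Set.range f))) ?_ ?_
    · exact Continuous.subtype_mk (continuous_subtype_val.comp continuous_subtype_val) _
    · intro a b hab
      have h1 := congrArg Subtype.val hab
      simp only [] at h1
      exact Subtype.ext (Subtype.ext h1)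
  have hZL : IsZLattice ℝ L := by
    constructor
    rw [hL, Submodule.span_span_of_tower]
    apply Submodule.map_injective_of_injective (Submodule.injective_subtype S)
    rw [Submodule.map_span, Submodule.map_top, Submodule.range_subtype, ← Set.range_comp]
    have : (S.subtype ∘ g) = f := rfl
    rw [this, ← hS]
  have hrank : finrank ℤ L = finrank ℝ S := ZLattice.rank ℝ L
  have hLr : finrank ℤ L = r := by
    rw [hL, finrank_eq_card_basis (Basis.span hlig), Fintype.card_fin]
  rw [linearIndependent_iff_card_eq_finrank_span, Fintype.card_fin]
  rw [Set.finrank, ← hS, ← hrank, hLr]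
end A1

namespace Lemma32
open NumberField.InfinitePlace

variable {L : Type*} [Field L] [NumberField L]

lemma map_prod_zpow {r : ℕ} (u : Fin r → (𝓞 L)ˣ) (m : Fin r → ℤ) (w : InfinitePlace L) :
    w ((((∏ j, u j ^ m j : (𝓞 L)ˣ) : 𝓞 L) : L)) = ∏ j, (w (((u j : 𝓞 L) : L))) ^ (m j) := by
  have h1 : (((∏ j, u j ^ m j : (𝓞 L)ˣ) : 𝓞 L) : L) = ∏ j, (((u j : 𝓞 L) : L)) ^ (m j) := by
    let F : (𝓞 L)ˣ →* Lˣ := Units.map (algebraMap (𝓞 L) L).toMonoidHom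
    have h2 : F (∏ j, u j ^ m j) = ∏ j, (F (u j)) ^ (m j) := by
      rw [map_prod]
      exact Finset.prod_congr rfl fun j _ => map_zpow F (u j) (m j)
    have h3 := congrArg (Units.val) h2
    have h4 : Units.val (∏ j, (F (u j)) ^ (m j)) = ∏ j, ((F (u j) : L)) ^ (m j) := by
      simp [Units.val_zpow_eq_zpow_val]
    rw [h4] at h3
    calc (((∏ j, u j ^ m j : (𝓞 L)ˣ) : 𝓞 L) : L)
        = Units.val (F (∏ j, u j ^ m j)) := by
          rw [RingOfIntegers.coe_eq_algebraMap]; rfl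
      _ = ∏ j, ((F (u j) : L)) ^ (m j) := h3
      _ = ∏ j, (((u j : 𝓞 L) : L)) ^ (m j) := by
          refine Finset.prod_congr rfl fun j _ => ?_
          rw [RingOfIntegers.coe_eq_algebraMap]; rfl
  rw [h1, map_prod]
  exact Finset.prod_congr rfl fun j _ => map_zpow₀ w _ _

lemma unit_coe_ne_zero (u : (𝓞 L)ˣ) : ((u : 𝓞 L) : L) ≠ 0 := by
  rw [RingOfIntegers.coe_eq_algebraMap]
  exact NumberField.Units.coe_ne_zero u

lemma infLogAbs_prod_zpow {r : ℕ} (u : Fin r → (𝓞 L)ˣ) (m : Fin r → ℤ) (w : InfinitePlace L) :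
    infLogAbs L w (((∏ j, u j ^ m j : (𝓞 L)ˣ) : 𝓞 L) : L)
      = ∑ j, (m j : ℝ) * infLogAbs L w (((u j : 𝓞 L) : L)) := by
  unfold infLogAbs
  rw [map_prod_zpow, Real.log_prod (fun j _ => zpow_ne_zero _ (by
      simpa using unit_coe_ne_zero (u j))), Finset.mul_sum]
  refine Finset.sum_congr rfl fun j _ => ?_
  rw [Real.log_zpow]
  ring

lemma infLogAbs_mul (w : InfinitePlace L) {x y : L} (hx : x ≠ 0) (hy : y ≠ 0) :
    infLogAbs L w (x * y) = infLogAbs L w x + infLogAbs L w y := by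
  unfold infLogAbs
  rw [map_mul, Real.log_mul (by simpa using hx) (by simpa using hy), mul_add]

lemma valuation_unit_eq_one (u : (𝓞 L)ˣ) (v : IsDedekindDomain.HeightOneSpectrum (𝓞 L)) :
    (v.valuation (K := L)) ((u : 𝓞 L) : L) = 1 := by
  have hval : ∀ x : 𝓞 L, (v.valuation (K := L)) (x : L) = v.intValuation x := fun x => by
    rw [RingOfIntegers.coe_eq_algebraMap, IsDedekindDomain.HeightOneSpectrum.valuation_of_algebraMap]
  have h1 : v.intValuation ((u : 𝓞 L)) * v.intValuation (((u⁻¹ : (𝓞 L)ˣ) : 𝓞 L)) = 1 := by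
    rw [← Valuation.map_mul,
      show ((u : 𝓞 L)) * ((u⁻¹ : (𝓞 L)ˣ) : 𝓞 L) = 1 from by simp]
    exact Valuation.map_one _
  have hle1 : v.intValuation ((u : 𝓞 L)) ≤ 1 := by
    rw [IsDedekindDomain.HeightOneSpectrum.intValuation_apply]
    exact IsDedekindDomain.HeightOneSpectrum.intValuation_le_one v _
  have hle2 : v.intValuation (((u⁻¹ : (𝓞 L)ˣ) : 𝓞 L)) ≤ 1 := by
    rw [IsDedekindDomain.HeightOneSpectrum.intValuation_apply]
    exact IsDedekindDomain.HeightOneSpectrum.intValuation_le_one v _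
  have hge : (1 : WithZero (Multiplicative ℤ)) ≤ v.intValuation ((u : 𝓞 L)) := by
    calc (1 : WithZero (Multiplicative ℤ))
        = v.intValuation ((u : 𝓞 L)) * v.intValuation (((u⁻¹ : (𝓞 L)ˣ) : 𝓞 L)) := h1.symm
      _ ≤ v.intValuation ((u : 𝓞 L)) * 1 := mul_le_mul_right hle2 _
      _ = v.intValuation ((u : 𝓞 L)) := mul_one _
  rw [hval]
  exact le_antisymm hle1 hge

lemma finLogAbs_unit (u : (𝓞 L)ˣ) (v : IsDedekindDomain.HeightOneSpectrum (𝓞 L)) :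
    finLogAbs L v ((u : 𝓞 L) : L) = 0 := by
  unfold finLogAbs
  have h := valuation_unit_eq_one u v
  split_ifs with hv
  · rfl
  · have hv' : (v.valuation (K := L)) ((u : 𝓞 L) : L) ≠ 0 := hv
    have h2 : WithZero.unzero (α := Multiplicative ℤ) hv' = 1 := by
      have h3 : (WithZero.unzero (α := Multiplicative ℤ) hv' : WithZero (Multiplicative ℤ)) = ((1 : Multiplicative ℤ) : WithZero (Multiplicative ℤ)) := by
        rw [WithZero.coe_unzero, h, WithZero.coe_one]
      exact WithZero.coe_inj.mp h3
    rw [show WithZero.unzero hv = WithZero.unzero (α := Multiplicative ℤ) hv' from rfl, h2]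
    simp

end Lemma32

namespace Lemma32

open NumberField.Units NumberField.Units.dirichletUnitTheorem Submodule

variable {L : Type*} [Field L] [NumberField L]

lemma coe_prod_zpow {r : ℕ} (u : Fin r → (𝓞 L)ˣ) (m : Fin r → ℤ) :
    (((∏ j, u j ^ m j : (𝓞 L)ˣ) : 𝓞 L) : L) = ∏ j, (((u j : 𝓞 L) : L)) ^ (m j) := by
  let F : (𝓞 L)ˣ →* Lˣ := Units.map (algebraMap (𝓞 L) L).toMonoidHom
  have h2 : F (∏ j, u j ^ m j) = ∏ j, (F (u j)) ^ (m j) := by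
    rw [map_prod]
    exact Finset.prod_congr rfl fun j _ => map_zpow F (u j) (m j)
  have h3 := congrArg (Units.val) h2
  have h4 : Units.val (∏ j, (F (u j)) ^ (m j)) = ∏ j, ((F (u j) : L)) ^ (m j) := by
    simp [Units.val_zpow_eq_zpow_val]
  rw [h4] at h3
  calc (((∏ j, u j ^ m j : (𝓞 L)ˣ) : 𝓞 L) : L)
      = Units.val (F (∏ j, u j ^ m j)) := by
        rw [RingOfIntegers.coe_eq_algebraMap]; rfl
    _ = ∏ j, ((F (u j) : L)) ^ (m j) := h3
    _ = ∏ j, (((u j : 𝓞 L) : L)) ^ (m j) := by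
        refine Finset.prod_congr rfl fun j _ => ?_
        rw [RingOfIntegers.coe_eq_algebraMap]; rfl

/-- The full (unnormalized) logarithmic vector of a unit. -/
noncomputable def fullLog (u : (𝓞 L)ˣ) : InfinitePlace L → ℝ :=
  fun w => (w.mult : ℝ) * Real.log (w ((u : 𝓞 L) : L))

lemma sum_smul_fullLog {r : ℕ} (u : Fin r → (𝓞 L)ˣ) (m : Fin r → ℤ) :
    (∑ j, m j • fullLog (u j)) = fullLog (∏ j, u j ^ m j) := by
  funext w
  rw [Finset.sum_apply]
  unfold fullLog
  rw [map_prod_zpow, Real.log_prod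
      (fun j _ => zpow_ne_zero _ (by simpa using unit_coe_ne_zero (u j))), Finset.mul_sum]
  refine Finset.sum_congr rfl fun j _ => ?_
  rw [Pi.smul_apply, Real.log_zpow, zsmul_eq_mul]
  push_cast
  ring

lemma fullLog_eq_zero_of_torsion {U : (𝓞 L)ˣ} (h : U ∈ NumberField.Units.torsion L) :
    fullLog U = 0 := by
  funext w
  have h1 : w ((U : 𝓞 L) : L) = 1 := by
    rw [RingOfIntegers.coe_eq_algebraMap]
    exact (NumberField.Units.mem_torsion L).mp h w
  unfold fullLog
  rw [h1, Real.log_one, mul_zero, Pi.zero_apply]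

lemma torsion_of_fullLog_eq_zero {U : (𝓞 L)ˣ} (h : fullLog U = 0) :
    U ∈ NumberField.Units.torsion L := by
  rw [← logEmbedding_eq_zero_iff]
  funext w'
  have := congrFun h w'.val
  unfold fullLog at this
  rw [logEmbedding_component, Pi.zero_apply, ← RingOfIntegers.coe_eq_algebraMap]
  exact this

lemma fullLog_linearIndependent {r : ℕ} (u : Fin r → (𝓞 L)ˣ)
    (hind : MulIndep (fun j => ((u j : 𝓞 L) : L))) :
    LinearIndependent ℝ (fun j => fullLog (u j)) := by
  classical
  -- ℤ-independence
  have hkey : ∀ m : Fin r → ℤ, (∑ j, m j • fullLog (u j)) = 0 → m = 0 := by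
    intro m hm
    rw [sum_smul_fullLog] at hm
    have htor := torsion_of_fullLog_eq_zero hm
    have hfin : IsOfFinOrder (∏ j, u j ^ m j) := by
      rwa [NumberField.Units.torsion, CommGroup.mem_torsion] at htor
    obtain ⟨N, hN, hpow⟩ := isOfFinOrder_iff_pow_eq_one.mp hfin
    have hcoe : (∏ j, (((u j : 𝓞 L) : L)) ^ ((N : ℤ) * m j)) = 1 := by
      have h1 : (∏ j, (((u j : 𝓞 L) : L)) ^ (m j)) ^ (N : ℤ) = 1 := by
        rw [← coe_prod_zpow u m, zpow_natCast, RingOfIntegers.coe_eq_algebraMap, ← map_pow,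
          ← Units.val_pow_eq_pow_val, hpow]
        simp
      calc ∏ j, (((u j : 𝓞 L) : L)) ^ ((N : ℤ) * m j)
          = ∏ j, ((((u j : 𝓞 L) : L)) ^ (m j)) ^ (N : ℤ) :=
            Finset.prod_congr rfl fun j _ => by rw [← zpow_mul, mul_comm]
        _ = (∏ j, (((u j : 𝓞 L) : L)) ^ (m j)) ^ (N : ℤ) := by
            rw [← Finset.prod_zpow]
        _ = 1 := h1
    have hz := hind (fun j => (N : ℤ) * m j) hcoe
    funext j
    have := congrFun hz j
    simp only [Pi.zero_apply] at this ⊢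
    rcases mul_eq_zero.mp this with h | h
    · exact absurd h (by exact_mod_cast hN.ne')
    · exact h
  have hliZ : LinearIndependent ℤ (fun j => fullLog (u j)) := by
    rw [Fintype.linearIndependent_iff]
    intro g hg j
    exact congrFun (hkey g hg) j
  -- discreteness of the ℤ-span
  have hρ : ∀ U : (𝓞 L)ˣ,
      (LinearMap.funLeft ℝ ℝ (Subtype.val : {w : InfinitePlace L // w ≠ w₀} → InfinitePlace L))
        (fullLog U) = logEmbedding L (Additive.ofMul U) := by
    intro U
    funext w'
    rw [LinearMap.funLeft_apply, logEmbedding_component]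
    unfold fullLog
    rw [RingOfIntegers.coe_eq_algebraMap]
  set ρ := LinearMap.funLeft ℝ ℝ (Subtype.val : {w : InfinitePlace L // w ≠ w₀} → InfinitePlace L)
    with hρdef
  have hmemUL : ∀ x ∈ span ℤ (Set.range (fun j => fullLog (u j))), ρ x ∈ unitLattice L := by
    intro x hx
    have hle : span ℤ (Set.range (fun j => fullLog (u j)))
        ≤ Submodule.comap (ρ.restrictScalars ℤ) (unitLattice L) := by
      rw [span_le]
      rintro _ ⟨j, rfl⟩
      rw [SetLike.mem_coe, Submodule.mem_comap, LinearMap.restrictScalars_apply, hρ]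
      exact ⟨Additive.ofMul (u j), trivial, rfl⟩
    exact hle hx
  have hinj0 : ∀ x ∈ span ℤ (Set.range (fun j => fullLog (u j))), ρ x = 0 → x = 0 := by
    intro x hx hx0
    obtain ⟨m, hm⟩ := (mem_span_range_iff_exists_fun ℤ).mp hx
    rw [← hm, sum_smul_fullLog] at hx0 ⊢
    rw [hρ] at hx0
    have : (∏ j, u j ^ m j) ∈ NumberField.Units.torsion L := by
      rwa [← logEmbedding_eq_zero_iff]
    exact fullLog_eq_zero_of_torsion this
  have hdisc : DiscreteTopology (span ℤ (Set.range (fun j => fullLog (u j)))) := by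
    refine discrete_of_ci (Y := unitLattice L)
      (f := fun x : span ℤ (Set.range (fun j => fullLog (u j))) => ⟨ρ x.1, hmemUL x.1 x.2⟩) ?_ ?_
    · exact Continuous.subtype_mk
        ((ρ.continuous_of_finiteDimensional).comp continuous_subtype_val) _
    · intro a b hab
      have h1 : ρ a.1 = ρ b.1 := congrArg Subtype.val hab
      have h2 : ρ (a.1 - b.1) = 0 := by rw [map_sub, h1, sub_self]
      have h3 : a.1 - b.1 = 0 := hinj0 _ (sub_mem a.2 b.2) h2
      exact Subtype.ext (sub_eq_zero.mp h3)
  exact linearIndependent_real_of_int hdisc hliZ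

end Lemma32


namespace Lemma32

open NumberField.InfinitePlace Submodule

variable {L : Type*} [Field L] [NumberField L]

lemma sum_infLogAbs_eq_zero (u : (𝓞 L)ˣ) :
    ∑ w : InfinitePlace L, infLogAbs L w ((u : 𝓞 L) : L) = 0 := by
  have h := congrArg Real.log (prod_eq_abs_norm (((u : 𝓞 L) : L)))
  rw [Real.log_prod (fun w _ => pow_ne_zero _ (by simpa using unit_coe_ne_zero u))] at h
  have hn : |(Algebra.norm ℚ) (((u : 𝓞 L) : L))| = 1 := by
    rw [RingOfIntegers.coe_eq_algebraMap]; exact NumberField.Units.norm L u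
  rw [hn] at h
  simp only [Real.log_pow, Rat.cast_one, Real.log_one] at h
  have h2 : ∑ w : InfinitePlace L, infLogAbs L w ((u : 𝓞 L) : L)
      = (∑ w : InfinitePlace L, (w.mult : ℝ) * Real.log (w ((u : 𝓞 L) : L)))
        / (finrank ℚ L : ℝ) := by
    rw [Finset.sum_div]
    exact Finset.sum_congr rfl fun w _ => by unfold infLogAbs; ring
  rw [h2, h, zero_div]

lemma abs_eq_two_max (a : ℝ) : |a| = 2 * max 0 a - a := by
  rcases le_total 0 a with h | h
  · rw [abs_of_nonneg h, max_eq_right h]; ring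
  · rw [abs_of_nonpos h, max_eq_left h]; ring

lemma sum_abs_infLogAbs (u : (𝓞 L)ˣ) :
    ∑ w : InfinitePlace L, |infLogAbs L w ((u : 𝓞 L) : L)|
      = 2 * weilHeight L ((u : 𝓞 L) : L) := by
  have hfin : ∑ᶠ v : IsDedekindDomain.HeightOneSpectrum (𝓞 L),
      max 0 (finLogAbs L v ((u : 𝓞 L) : L)) = 0 := by
    have h : ∀ v : IsDedekindDomain.HeightOneSpectrum (𝓞 L),
        max 0 (finLogAbs L v ((u : 𝓞 L) : L)) = 0 := fun v => by
      rw [finLogAbs_unit]; simp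
    simp only [h]
    exact finsum_zero
  unfold weilHeight
  rw [hfin, add_zero, Finset.sum_congr rfl (fun w _ => abs_eq_two_max _),
    Finset.sum_sub_distrib, sum_infLogAbs_eq_zero, sub_zero, Finset.mul_sum]

variable {K : Type*} [Field K] [NumberField K] [Algebra K L]

lemma fiber_sum_zero (u : (𝓞 L)ˣ) {nn : ℕ} (hnn : 0 < nn)
    (hnorm : ((Algebra.norm K) (((u : 𝓞 L) : L))) ^ nn = 1) (v : InfinitePlace K) :
    ∑ w ∈ placesAbove K L v, infLogAbs L w ((u : 𝓞 L) : L) = 0 := by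
  have hx : (((u : 𝓞 L) : L)) ≠ 0 := unit_coe_ne_zero u
  have hv1 : v ((Algebra.norm K) (((u : 𝓞 L) : L))) = 1 := by
    have h0 : 0 ≤ v ((Algebra.norm K) (((u : 𝓞 L) : L))) := AbsoluteValue.nonneg _ _
    have hp : (v ((Algebra.norm K) (((u : 𝓞 L) : L)))) ^ nn = 1 := by
      rw [← map_pow, hnorm, map_one]
    by_contra hne
    rcases lt_or_gt_of_ne hne with hlt | hgt
    · have := pow_lt_one₀ h0 hlt hnn.ne'
      rw [hp] at this; exact lt_irrefl _ this
    · have := one_lt_pow₀ hgt hnn.ne'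
      rw [hp] at this; exact lt_irrefl _ this
  have hprod := Lemma32.prod_placesAbove K L v (((u : 𝓞 L) : L))
  rw [hv1, one_pow] at hprod
  have hlog := congrArg Real.log hprod
  rw [Real.log_prod (fun w _ => pow_ne_zero _ (by simpa using hx)), Real.log_one] at hlog
  simp only [Real.log_pow] at hlog
  have h2 : ∑ w ∈ placesAbove K L v, infLogAbs L w ((u : 𝓞 L) : L)
      = (∑ w ∈ placesAbove K L v, (w.mult : ℝ) * Real.log (w ((u : 𝓞 L) : L)))
        / (finrank ℚ L : ℝ) := by
    rw [Finset.sum_div]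
    exact Finset.sum_congr rfl fun w _ => by unfold infLogAbs; ring
  rw [h2, hlog, zero_div]

end Lemma32

end Lemma32Aux

/-- **Lemma 3.2.** Let `ε₁, …, ε_{r(l/k)}` (with `r(l/k) = r(l) − r(k)`) be multiplicatively
independent relative units in `E_{l/k}(𝔐)`, generating the subgroup `𝔈`.  If `μ ∈ l^×`,
then there is `γ ∈ 𝔈` such that
`∑_{v∣∞} ∑_{w∣v} |log|γμ|_w − |W_v(l/k)|⁻¹ ∑_{x∣v} log|γμ|_x| ≤ ∑ⱼ h(εⱼ)`. -/
theorem exists_relUnit_balancing_archimedean_logs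
    (K L : Type*) [Field K] [NumberField K] [Field L] [NumberField L] [Algebra K L]
    (e : ℕ) (he : e = finrank K L) (b : Basis (Fin e) K L)
    (hbInt : ∀ i, IsIntegral ℤ (b i))
    (M : Set L) (hM : M = fullModule K (fun i => b i))
    (ε : Fin (Units.rank L - Units.rank K) → L)
    (hε : ∀ j, ε j ∈ relUnits K L M) (hind : MulIndep ε)
    (μ : L) (hμ : μ ≠ 0) :
    ∃ γ : L, (∃ m : Fin (Units.rank L - Units.rank K) → ℤ, γ = ∏ j, ε j ^ m j) ∧
      ∑ v : InfinitePlace K, ∑ w ∈ placesAbove K L v,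
          |infLogAbs L w (γ * μ) -
            ((placesAbove K L v).card : ℝ)⁻¹ *
              ∑ x ∈ placesAbove K L v, infLogAbs L x (γ * μ)| ≤
        ∑ j, weilHeight L (ε j) := by
  classical
  haveI : Algebra.IsAlgebraic K L := Algebra.IsAlgebraic.of_finite K L
  have hεunit : ∀ j, ∃ u : (𝓞 L)ˣ, ((u : 𝓞 L) : L) = ε j := fun j => (hε j).1.2
  choose u hu using hεunit
  have hεne : ∀ j, ε j ≠ 0 := fun j => by rw [← hu j]; exact Lemma32.unit_coe_ne_zero (u j)
  set cmp : InfinitePlace L → InfinitePlace K := fun w => w.comap (algebraMap K L) with hcmp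
  set Φ : (InfinitePlace L → ℝ) →ₗ[ℝ] (InfinitePlace K → ℝ) :=
    LinearMap.pi (fun v => ∑ w ∈ placesAbove K L v, LinearMap.proj w) with hΦdef
  have hΦ : ∀ (f : InfinitePlace L → ℝ) (v : InfinitePlace K),
      Φ f v = ∑ w ∈ placesAbove K L v, f w := by
    intro f v
    rw [hΦdef, LinearMap.pi_apply]
    simp
  have hmemWv : ∀ (v : InfinitePlace K) (w : InfinitePlace L),
      w ∈ placesAbove K L v ↔ cmp w = v := by
    intro v w
    simp [placesAbove, hcmp]
  have hWvne : ∀ v : InfinitePlace K, ∃ w, w ∈ placesAbove K L v := by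
    intro v
    obtain ⟨w, hw⟩ := NumberField.InfinitePlace.comap_surjective (k := K) (K := L) v
    exact ⟨w, (hmemWv v w).mpr hw⟩
  have hcardpos : ∀ v : InfinitePlace K, (0 : ℝ) < ((placesAbove K L v).card : ℝ) := by
    intro v
    obtain ⟨w, hw⟩ := hWvne v
    exact_mod_cast Finset.card_pos.mpr ⟨w, hw⟩
  have hΦsurj : Function.Surjective Φ := by
    intro g
    have hsec : ∀ v : InfinitePlace K, ∃ w, cmp w = v := fun v =>
      NumberField.InfinitePlace.comap_surjective v
    choose s hs using hsec
    refine ⟨fun w => if s (cmp w) = w then g (cmp w) else 0, ?_⟩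
    funext v
    rw [hΦ, Finset.sum_congr rfl (fun w hw => by rw [(hmemWv v w).mp hw]),
      Finset.sum_ite_eq (placesAbove K L v) (s v) (fun _ => g v),
      if_pos ((hmemWv v (s v)).mpr (hs v))]
  have hfinD : finrank ℝ (LinearMap.ker Φ) = Units.rank L - Units.rank K := by
    have h1 := LinearMap.finrank_range_add_finrank_ker Φ
    rw [LinearMap.range_eq_top.mpr hΦsurj, finrank_top, finrank_fintype_fun_eq_card,
      finrank_fintype_fun_eq_card] at h1
    have hle : Fintype.card (InfinitePlace K) ≤ Fintype.card (InfinitePlace L) :=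
      Fintype.card_le_of_surjective _ NumberField.InfinitePlace.comap_surjective
    have hpos : 0 < Fintype.card (InfinitePlace K) := Fintype.card_pos
    have hrK : Units.rank K = Fintype.card (InfinitePlace K) - 1 := rfl
    have hrL : Units.rank L = Fintype.card (InfinitePlace L) - 1 := rfl
    omega
  set d : Fin (Units.rank L - Units.rank K) → (InfinitePlace L → ℝ) :=
    fun j w => infLogAbs L w (ε j) with hddef
  have hdfull : ∀ j, d j = ((finrank ℚ L : ℝ)⁻¹) • Lemma32.fullLog (u j) := by
    intro j
    funext w
    simp only [hddef, Pi.smul_apply, smul_eq_mul, Lemma32.fullLog, ← hu j]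
    unfold infLogAbs
    ring
  have hdLI : LinearIndependent ℝ d := by
    have h1 := Lemma32.fullLog_linearIndependent u
      (by rw [show (fun j => ((u j : 𝓞 L) : L)) = ε from funext hu]; exact hind)
    have h2 := h1.units_smul (fun _ : Fin (Units.rank L - Units.rank K) =>
      Units.mk0 ((finrank ℚ L : ℝ)⁻¹)
      (inv_ne_zero (Nat.cast_ne_zero.mpr (Module.finrank_pos (R := ℚ) (M := L)).ne')))
    have h3 : d = (fun _ : Fin (Units.rank L - Units.rank K) =>
        Units.mk0 ((finrank ℚ L : ℝ)⁻¹)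
        (inv_ne_zero (Nat.cast_ne_zero.mpr (Module.finrank_pos (R := ℚ) (M := L)).ne')))
          • (fun j => Lemma32.fullLog (u j)) := by
      funext j
      rw [hdfull j]
      rfl
    rwa [← h3] at h2
  have hdD : ∀ j, Φ (d j) = 0 := by
    intro j
    funext v
    rw [hΦ, Pi.zero_apply]
    obtain ⟨-, nn, hnn, hnorm⟩ := hε j
    have hnorm' : ((Algebra.norm K) (((u j : 𝓞 L) : L))) ^ nn = 1 := by
      rw [hu j]; exact hnorm
    have h4 := Lemma32.fiber_sum_zero (u j) hnn hnorm' v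
    have h6 : ∑ w ∈ placesAbove K L v, d j w
        = ∑ w ∈ placesAbove K L v, infLogAbs L w ((u j : 𝓞 L) : L) :=
      Finset.sum_congr rfl fun w _ => by simp only [hddef]; rw [← hu j]
    rw [h6]
    exact h4
  set D := LinearMap.ker Φ with hDdef
  set dD : Fin (Units.rank L - Units.rank K) → D :=
    fun j => ⟨d j, LinearMap.mem_ker.mpr (hdD j)⟩ with hdDdef
  have hdDLI : LinearIndependent ℝ dD :=
    LinearIndependent.of_comp (D.subtype) (by exact hdLI)
  have hspan : Submodule.span ℝ (Set.range dD) = ⊤ := by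
    apply Submodule.eq_top_of_finrank_eq
    rw [finrank_span_eq_card hdDLI, Fintype.card_fin, hfinD]
  set A : (InfinitePlace L → ℝ) →ₗ[ℝ] (InfinitePlace L → ℝ) :=
    LinearMap.pi (fun w => LinearMap.proj w -
      ((placesAbove K L (cmp w)).card : ℝ)⁻¹ • ((LinearMap.proj (cmp w)).comp Φ)) with hAdef
  have hA : ∀ f w, A f w = f w - ((placesAbove K L (cmp w)).card : ℝ)⁻¹ * Φ f (cmp w) := by
    intro f w
    rw [hAdef, LinearMap.pi_apply]
    simp
  have hAker : ∀ f, Φ (A f) = 0 := by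
    intro f
    funext v
    rw [hΦ, Pi.zero_apply, Finset.sum_congr rfl (fun w hw => by
      rw [hA, (hmemWv v w).mp hw]), Finset.sum_sub_distrib, ← hΦ, Finset.sum_const,
      nsmul_eq_mul, ← mul_assoc, mul_inv_cancel₀ (hcardpos v).ne', one_mul, sub_self]
  have hAid : ∀ f, Φ f = 0 → A f = f := by
    intro f hf
    funext w
    rw [hA, hf]
    simp
  set lvμ : InfinitePlace L → ℝ := fun w => infLogAbs L w μ with hlvμ
  have hAμD : A lvμ ∈ D := LinearMap.mem_ker.mpr (hAker lvμ)
  have hmemtop : (⟨A lvμ, hAμD⟩ : D) ∈ Submodule.span ℝ (Set.range dD) := by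
    rw [hspan]; trivial
  obtain ⟨c, hc⟩ := (Submodule.mem_span_range_iff_exists_fun ℝ).mp hmemtop
  refine ⟨∏ j, ε j ^ (-(round (c j)) : ℤ), ⟨fun j => -(round (c j)), rfl⟩, ?_⟩
  set m : Fin (Units.rank L - Units.rank K) → ℤ := fun j => -(round (c j)) with hmdef
  set γ := ∏ j, ε j ^ m j with hγdef
  have hγne : γ ≠ 0 := by
    rw [hγdef]
    exact Finset.prod_ne_zero_iff.mpr (fun j _ => zpow_ne_zero _ (hεne j))
  set lvγμ : InfinitePlace L → ℝ := fun w => infLogAbs L w (γ * μ) with hlvγμ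
  have hlvsplit : lvγμ = (fun w => infLogAbs L w γ) + lvμ := by
    funext w
    show infLogAbs L w (γ * μ) = infLogAbs L w γ + infLogAbs L w μ
    exact Lemma32.infLogAbs_mul w hγne hμ
  have hlvγ : (fun w => infLogAbs L w γ) = ∑ j, (m j : ℝ) • d j := by
    funext w
    show infLogAbs L w γ = (∑ j, (m j : ℝ) • d j) w
    have hγu : γ = (((∏ j, u j ^ m j : (𝓞 L)ˣ) : 𝓞 L) : L) := by
      rw [hγdef, Lemma32.coe_prod_zpow]
      exact (Finset.prod_congr rfl fun j _ => by rw [hu j]).symm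
    rw [hγu, Lemma32.infLogAbs_prod_zpow, Finset.sum_apply]
    refine Finset.sum_congr rfl fun j _ => ?_
    simp only [Pi.smul_apply, smul_eq_mul, hddef]
    rw [← hu j]
  have hAlvμ : A lvμ = ∑ j, c j • d j := by
    have h2 := congrArg Subtype.val hc
    simpa using h2.symm
  have hAγμ : A lvγμ = ∑ j, (c j - (round (c j) : ℝ)) • d j := by
    rw [hlvsplit, map_add, hlvγ, map_sum]
    have h5 : ∀ j, A ((m j : ℝ) • d j) = (m j : ℝ) • d j := by
      intro j
      rw [map_smul, hAid (d j) (hdD j)]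
    rw [Finset.sum_congr rfl (fun j _ => h5 j), hAlvμ, ← Finset.sum_add_distrib]
    refine Finset.sum_congr rfl fun j _ => ?_
    rw [← add_smul]
    congr 1
    rw [hmdef]
    push_cast
    ring
  have hstep1 : ∑ v : InfinitePlace K, ∑ w ∈ placesAbove K L v,
      |infLogAbs L w (γ * μ) - ((placesAbove K L v).card : ℝ)⁻¹ *
        ∑ x ∈ placesAbove K L v, infLogAbs L x (γ * μ)|
      = ∑ w : InfinitePlace L, |A lvγμ w| := by
    have hinner : ∀ (v : InfinitePlace K), ∀ w ∈ placesAbove K L v,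
        |infLogAbs L w (γ * μ) - ((placesAbove K L v).card : ℝ)⁻¹ *
          ∑ x ∈ placesAbove K L v, infLogAbs L x (γ * μ)| = |A lvγμ w| := by
      intro v w hw
      rw [hA lvγμ w, (hmemWv v w).mp hw, hΦ]
    rw [Finset.sum_congr rfl (fun v _ => Finset.sum_congr rfl (fun w hw => hinner v w hw))]
    have hfib := Finset.sum_fiberwise (Finset.univ : Finset (InfinitePlace L)) cmp
      (fun w => |A lvγμ w|)
    rw [← hfib]
    refine Finset.sum_congr rfl fun v _ => Finset.sum_congr ?_ (fun _ _ => rfl)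
    ext w
    simp [placesAbove, hcmp]
  rw [hstep1]
  have hdabs : ∀ j, ∑ w : InfinitePlace L, |d j w| = 2 * weilHeight L (ε j) := by
    intro j
    have := Lemma32.sum_abs_infLogAbs (u j)
    rw [hu j] at this
    exact this
  calc ∑ w : InfinitePlace L, |A lvγμ w|
      ≤ ∑ w : InfinitePlace L, ∑ j, (1/2 : ℝ) * |d j w| := by
        refine Finset.sum_le_sum fun w _ => ?_
        rw [hAγμ, Finset.sum_apply]
        refine (Finset.abs_sum_le_sum_abs _ _).trans (Finset.sum_le_sum fun j _ => ?_)
        rw [Pi.smul_apply, smul_eq_mul, abs_mul]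
        exact mul_le_mul_of_nonneg_right (abs_sub_round (c j)) (abs_nonneg _)
    _ = ∑ j, (1/2 : ℝ) * ∑ w : InfinitePlace L, |d j w| := by
        rw [Finset.sum_comm]
        exact Finset.sum_congr rfl fun j _ => by rw [Finset.mul_sum]
    _ = ∑ j, weilHeight L (ε j) := by
        refine Finset.sum_congr rfl fun j _ => ?_
        rw [hdabs j]
        ring
end

section
/- Let k ⊆ l be number fields, let 𝔐 ⊆ O_l be a full O_k-module generated by a k-basis of l, and let O_𝔐 = {α ∈ l : α𝔐 ⊆ 𝔐} with unit group O_𝔐^× = O_𝔐 ∩ O_l^×. Let norm_{l/k} : O_𝔐^×/Tor(O_𝔐^×) → O_k^×/Tor(O_k^×) be the homomorphism induced by the relative norm Norm_{l/k}. Then the image of norm_{l/k} has rank r(k), the rank of the unit group O_k^×. -/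
open NumberField Module

private lemma val_prod' {M : Type*} [CommMonoid M] {ι : Type*} (s : Finset ι) (v : ι → Mˣ) :
    ((∏ j ∈ s, v j : Mˣ) : M) = ∏ j ∈ s, ((v j : Mˣ) : M) :=
  map_prod (Units.coeHom M) _ _

private lemma zpow_finset_sum {G : Type*} [CommGroup G] {ι : Type*} (s : Finset ι) (x : G)
    (f : ι → ℤ) : x ^ (∑ j ∈ s, f j) = ∏ j ∈ s, x ^ f j := by
  classical
  induction s using Finset.induction with
  | empty => simp
  | insert a s h ih => rw [Finset.sum_insert h, Finset.prod_insert h, zpow_add, ih]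

/-- Transport a multiplicative relation among units of `𝓞 K` between `K` and `(𝓞 K)ˣ`. -/
private lemma units_rel_iff {K : Type*} [Field K] [NumberField K] {ι : Type*} [Fintype ι]
    (u : ι → (𝓞 K)ˣ) (m : ι → ℤ) (n : ℕ) :
    (∏ j, (((u j : 𝓞 K) : K)) ^ m j) ^ n = 1 ↔ (∏ j, u j ^ m j) ^ n = 1 := by
  set f : (𝓞 K) →* K := (algebraMap (𝓞 K) K).toMonoidHom with hf
  have hinj : Function.Injective (Units.map f) :=
    Units.map_injective (NumberField.RingOfIntegers.coe_injective)
  have key : ((Units.map f ((∏ j, u j ^ m j) ^ n) : Kˣ) : K)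
      = (∏ j, (((u j : 𝓞 K) : K)) ^ m j) ^ n := by
    rw [map_pow, map_prod, Units.val_pow_eq_pow_val, val_prod']
    congr 1
    refine Finset.prod_congr rfl fun j _ => ?_
    rw [map_zpow, Units.val_zpow_eq_zpow_val, Units.coe_map]
    rfl
  constructor
  · intro h
    have : Units.map f ((∏ j, u j ^ m j) ^ n) = Units.map f 1 := by
      ext
      rw [key, h]
      simp
    exact hinj this
  · intro h
    rw [← key, h]
    simp

private lemma exists_int_relation {r : ℕ} (v : Fin (r + 1) → (Fin r → ℤ)) :
    ∃ g : Fin (r + 1) → ℤ, g ≠ 0 ∧ ∑ j, g j • v j = 0 := by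
  have hnli : ¬ LinearIndependent ℤ v := by
    intro hli
    have := hli.fintype_card_le_finrank
    simp [Module.finrank_pi] at this
  rw [Fintype.not_linearIndependent_iff] at hnli
  obtain ⟨g, hg, i, hi⟩ := hnli
  exact ⟨g, fun h0 => hi (by simp [h0]), hg⟩

/-- **Step in Lemma 2.1.** The homomorphism `norm_{l/k} : O_𝔐^×/Tor(O_𝔐^×) →
O_k^×/Tor(O_k^×)` induced by the relative norm has image of rank `r(k)`: there are
`r(k)` elements of `O_𝔐^×` whose norms are multiplicatively independent modulo roots of
unity, while the norms of any `r(k) + 1` elements of `O_𝔐^×` are multiplicatively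
dependent modulo roots of unity. -/
theorem rank_image_of_induced_norm
    (K L : Type*) [Field K] [NumberField K] [Field L] [NumberField L] [Algebra K L]
    (e : ℕ) (he : e = finrank K L) (b : Basis (Fin e) K L)
    (hbInt : ∀ i, IsIntegral ℤ (b i))
    (M : Set L) (hM : M = fullModule K (fun i => b i)) :
    (∃ α : Fin (Units.rank K) → L, (∀ i, α i ∈ coeffRingUnits M) ∧
        ∀ m : Fin (Units.rank K) → ℤ,
          (∃ n : ℕ, 0 < n ∧ (∏ j, Algebra.norm K (α j) ^ m j) ^ n = 1) → m = 0) ∧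
      ∀ α : Fin (Units.rank K + 1) → L, (∀ i, α i ∈ coeffRingUnits M) →
        ∃ m : Fin (Units.rank K + 1) → ℤ, m ≠ 0 ∧
          ∃ n : ℕ, 0 < n ∧ (∏ j, Algebra.norm K (α j) ^ m j) ^ n = 1 := by
  haveI : FiniteDimensional K L := Module.Finite.of_basis b
  have hd : 0 < finrank K L := finrank_pos
  set d : ℕ := finrank K L with hdd
  constructor
  · -- r(K) independent elements: images of the fundamental units of K
    set η : Fin (Units.rank K) → (𝓞 K)ˣ := NumberField.Units.fundSystem K with hη
    refine ⟨fun i => algebraMap K L ((η i : 𝓞 K) : K), fun i => ?_, ?_⟩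
    · constructor
      · -- coefficient ring membership
        subst hM
        rintro x ⟨ν, rfl⟩
        refine ⟨fun j => (η i : 𝓞 K) * ν j, ?_⟩
        rw [Finset.mul_sum]
        refine Finset.sum_congr rfl fun j _ => ?_
        rw [← mul_assoc, ← map_mul]
        push_cast
        ring_nf
      · -- it is the image of a unit of 𝓞 L
        refine ⟨Units.map (algebraMap (𝓞 K) (𝓞 L)).toMonoidHom (η i), rfl⟩
    · -- independence
      intro m ⟨n, hn, hprod⟩
      have hnorm : ∀ j, Algebra.norm K (algebraMap K L ((η j : 𝓞 K) : K))
          = (((η j : 𝓞 K) : K)) ^ d := fun j => Algebra.norm_algebraMap _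
      have hrel : (∏ j, (((η j : 𝓞 K) : K)) ^ ((d : ℤ) * m j)) ^ n = 1 := by
        rw [← hprod]
        congr 1
        refine Finset.prod_congr rfl fun j _ => ?_
        rw [hnorm j, ← zpow_natCast (((η j : 𝓞 K) : K)) d, ← zpow_mul]
      rw [units_rel_iff] at hrel
      -- move the outer `^ n` inside
      have hrel2 : ∏ j, η j ^ ((d : ℤ) * m j * n) = 1 := by
        rw [← hrel, ← Finset.prod_pow]
        refine Finset.prod_congr rfl fun j _ => ?_
        rw [← zpow_natCast (η j ^ ((d : ℤ) * m j)) n, ← zpow_mul]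
      -- uniqueness of the fundamental-system representation
      obtain ⟨y, hy, huniq⟩ := NumberField.Units.exist_unique_eq_mul_prod K (1 : (𝓞 K)ˣ)
      have h1 : ((1 : NumberField.Units.torsion K), fun j => (d : ℤ) * m j * n) = y :=
        huniq _ (by simp only [OneMemClass.coe_one, one_mul]; exact hrel2.symm)
      have h2 : ((1 : NumberField.Units.torsion K), (0 : Fin (Units.rank K) → ℤ)) = y :=
        huniq _ (by simp only [OneMemClass.coe_one, one_mul, zpow_zero, Pi.zero_apply,
          Finset.prod_const_one])
      have hc : (fun j => (d : ℤ) * m j * n) = (0 : Fin (Units.rank K) → ℤ) :=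
        congrArg Prod.snd (h1.trans h2.symm)
      funext j
      have := congrFun hc j
      have hdn : (d : ℤ) ≠ 0 := by exact_mod_cast hd.ne'
      have hnn : (n : ℤ) ≠ 0 := by exact_mod_cast hn.ne'
      simp only [Pi.zero_apply, mul_eq_zero] at this ⊢
      rcases this with (h | h)
      · rcases h with (h | h)
        · exact absurd h hdn
        · exact h
      · exact absurd h hnn
  · -- any r(K) + 1 elements are dependent
    intro α hα
    choose w hw using fun j => (hα j).2
    -- the norms are units of 𝓞 K
    have hIsUnit : ∀ j, IsUnit (RingOfIntegers.norm K ((w j : 𝓞 L))) := fun j =>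
      (RingOfIntegers.isUnit_norm K).mpr (w j).isUnit
    set u : Fin (Units.rank K + 1) → (𝓞 K)ˣ := fun j => (hIsUnit j).unit with hu
    have huval : ∀ j, (((u j : 𝓞 K)) : K) = Algebra.norm K (α j) := by
      intro j
      rw [hu]
      simp only [IsUnit.unit_spec]
      rw [RingOfIntegers.coe_norm, hw j]
    -- decompose each u j
    have hdec : ∀ j, ∃ p : NumberField.Units.torsion K × (Fin (Units.rank K) → ℤ),
        u j = p.1 * ∏ i, NumberField.Units.fundSystem K i ^ p.2 i := fun j =>
      (NumberField.Units.exist_unique_eq_mul_prod K (u j)).exists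
    choose p hp using hdec
    obtain ⟨g, hg0, hgsum⟩ := exists_int_relation (fun j => (p j).2)
    refine ⟨g, hg0, ?_⟩
    -- the combination is a torsion element
    set t : NumberField.Units.torsion K := ∏ j, (p j).1 ^ g j with ht
    have hcomb : ∏ j, u j ^ g j = (t : (𝓞 K)ˣ) := by
      rw [ht]
      push_cast
      calc ∏ j, u j ^ g j
          = ∏ j, (((p j).1 : (𝓞 K)ˣ) ^ g j *
              ∏ i, NumberField.Units.fundSystem K i ^ ((p j).2 i * g j)) := by
            refine Finset.prod_congr rfl fun j _ => ?_
            rw [hp j, mul_zpow]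
            congr 1
            rw [← Finset.prod_zpow]
            refine Finset.prod_congr rfl fun i _ => ?_
            rw [← zpow_mul]
        _ = (∏ j, ((p j).1 : (𝓞 K)ˣ) ^ g j) *
              ∏ i, NumberField.Units.fundSystem K i ^ (∑ j, (p j).2 i * g j) := by
            rw [Finset.prod_mul_distrib]
            congr 1
            rw [Finset.prod_comm]
            refine Finset.prod_congr rfl fun i _ => ?_
            rw [zpow_finset_sum]
        _ = ∏ j, ((p j).1 : (𝓞 K)ˣ) ^ g j := by
            have : ∀ i, (∑ j, (p j).2 i * g j) = 0 := by
              intro i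
              have := congrFun hgsum i
              simpa [Finset.sum_apply, mul_comm] using this
            simp [this]
    have htor : IsOfFinOrder ((t : (𝓞 K)ˣ)) := t.2
    obtain ⟨n, hn, hpow⟩ := isOfFinOrder_iff_pow_eq_one.mp htor
    refine ⟨n, hn, ?_⟩
    have : (∏ j, (((u j : 𝓞 K)) : K) ^ g j) ^ n = 1 := by
      rw [units_rel_iff, hcomb, hpow]
    rw [← this]
    congr 1
    exact Finset.prod_congr rfl fun j _ => by rw [huval j]
end

section
/- Let k ⊆ l be number fields, let 𝔐 ⊆ O_l be a full O_k-module generated by a k-basis of l, and let E_{l/k}(𝔐) be its group of relative units, of rank r(l/k) = r(l) − r(k). Let ε₁, …, ε_{r(l/k)} be multiplicatively independent elements of E_{l/k}(𝔐), and let M = (log|ε_j|_w) be the real matrix with rows indexed by the archimedean places w of l and columns indexed by j = 1, …, r(l/k). Then M has rank r(l/k), and the linear map y ↦ My from ℝ^{r(l/k)} to ℝ^{W_∞(l)} maps ℝ^{r(l/k)} onto the subspace D_{r(l/k)} = {ξ ∈ ℝ^{W_∞(l)} : ∑_{w|v} ξ_w = 0 for each archimedean place v of k}. -/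
open NumberField Module

/-- The linear functional `ξ ↦ ∑_{w∣v} ξ_w` on `ℝ^{W_∞(l)}`. -/
noncomputable def sumAbove (K : Type*) [Field K] (L : Type*) [Field L] [NumberField L]
    [Algebra K L] (v : InfinitePlace K) : (InfinitePlace L → ℝ) →ₗ[ℝ] ℝ :=
  ∑ w ∈ placesAbove K L v, LinearMap.proj w

/-- The subspace `D = {ξ ∈ ℝ^{W_∞(l)} : ∑_{w∣v} ξ_w = 0 for each v ∈ W_∞(k)}`. -/
noncomputable def subspaceD (K : Type*) [Field K] (L : Type*) [Field L] [NumberField L]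
    [Algebra K L] : Submodule ℝ (InfinitePlace L → ℝ) :=
  ⨅ v : InfinitePlace K, LinearMap.ker (sumAbove K L v)


section Aux

open Finset Matrix NumberField.InfinitePlace NumberField.Units
open NumberField.Units.dirichletUnitTheorem
open scoped Classical

/-- Rows of a rational matrix that are `ℚ`-linearly independent stay linearly
independent over `ℝ` after coercion. -/
private lemma rows_indep_cast {r n : ℕ} (N : Matrix (Fin r) (Fin n) ℚ)
    (h : LinearIndependent ℚ (fun j : Fin r => N j)) :
    LinearIndependent ℝ (fun j : Fin r => fun i : Fin n => ((N j i : ℝ))) := by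
  have hG : (N * Nᵀ).det ≠ 0 := by
    rw [Ne, ← Matrix.exists_mulVec_eq_zero_iff]
    rintro ⟨c, hc0, hc⟩
    rw [← Matrix.mulVec_mulVec] at hc
    have h0 : Matrix.vecMul c N ⬝ᵥ Matrix.vecMul c N = 0 := by
      have := congrArg (fun y => dotProduct c y) hc
      simpa [Matrix.dotProduct_mulVec, Matrix.mulVec_transpose] using this
    have hy : Matrix.vecMul c N = 0 := dotProduct_self_eq_zero.mp h0
    refine hc0 (funext (Fintype.linearIndependent_iff.mp h c ?_))
    funext i
    have := congrFun hy i
    simpa [Matrix.vecMul, dotProduct, Finset.sum_apply, mul_comm] using this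
  set N' : Matrix (Fin r) (Fin n) ℝ := N.map ((↑) : ℚ → ℝ) with hN'
  have hG' : (N' * N'ᵀ).det ≠ 0 := by
    have : (N' * N'ᵀ) = (N * Nᵀ).map ((Rat.castHom ℝ : ℚ →+* ℝ)) := by
      ext i j
      simp [Matrix.mul_apply, hN']
    rw [this]
    show ((Rat.castHom ℝ).mapMatrix (N * Nᵀ)).det ≠ 0
    rw [← RingHom.map_det]
    simpa using hG
  rw [Fintype.linearIndependent_iff]
  intro c hc
  have hrow : Matrix.vecMul c N' = 0 := by
    funext i
    have := congrFun hc i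
    simpa [Matrix.vecMul, dotProduct, Finset.sum_apply, mul_comm, hN'] using this
  have h2 : Matrix.vecMul c (N' * N'ᵀ) = 0 := by
    rw [← Matrix.vecMul_vecMul, hrow]
    simp
  by_contra hex
  push_neg at hex
  obtain ⟨j, hj⟩ := hex
  have : ∃ v ≠ 0, Matrix.vecMul v (N' * N'ᵀ) = 0 :=
    ⟨c, fun h0 => hj (by rw [h0]; rfl), h2⟩
  exact hG' (Matrix.exists_vecMul_eq_zero_iff.mp this)

variable {K L : Type*} [Field K] [NumberField K] [Field L] [NumberField L] [Algebra K L]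

private lemma prod_extensions_eq (σ : K →+* ℂ) (x : L) :
    ∏ φ ∈ Finset.univ.filter (fun φ : L →+* ℂ => φ.comp (algebraMap K L) = σ),
      ‖φ x‖ = ‖σ (Algebra.norm K x)‖ := by
  haveI : FiniteDimensional K L := Module.Finite.of_restrictScalars_finite ℚ K L
  letI : Algebra K ℂ := σ.toAlgebra
  have h := Algebra.norm_eq_prod_embeddings K ℂ (x := x)
  have halg : algebraMap K ℂ = σ := rfl
  rw [halg] at h
  rw [h, norm_prod,
    Finset.prod_subtype (Finset.univ.filter (fun φ : L →+* ℂ => φ.comp (algebraMap K L) = σ))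
      (p := fun φ : L →+* ℂ => φ.comp (algebraMap K L) = σ)
      (fun φ => by simp) (fun φ : L →+* ℂ => ‖φ x‖)]
  let e : {φ : L →+* ℂ // φ.comp (algebraMap K L) = σ} ≃ (L →ₐ[K] ℂ) :=
    { toFun := fun φ => { toRingHom := φ.1, commutes' := fun c => RingHom.congr_fun φ.2 c }
      invFun := fun τ => ⟨τ.toRingHom, by ext c; exact τ.commutes c⟩
      left_inv := fun φ => by ext; rfl
      right_inv := fun τ => by ext; rfl }
  exact Fintype.prod_equiv e _ _ (fun φ => rfl)

/-- The relative version of the product formula over the infinite places above a fixed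
infinite place `v` of the base field. -/
private lemma prod_placesAbove_eq (v : NumberField.InfinitePlace K) (x : L) :
    ∏ w ∈ placesAbove K L v, (w x) ^ w.mult = (v (Algebra.norm K x)) ^ v.mult := by
  have hpa : placesAbove K L v
      = Finset.univ.filter (fun w : NumberField.InfinitePlace L =>
          w.comap (algebraMap K L) = v) := rfl
  rw [hpa]
  have key : ∏ w ∈ Finset.univ.filter
        (fun w : NumberField.InfinitePlace L => w.comap (algebraMap K L) = v), (w x) ^ w.mult
      = ∏ φ ∈ Finset.univ.filter
        (fun φ : L →+* ℂ => InfinitePlace.mk (φ.comp (algebraMap K L)) = v),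
          ‖φ x‖ := by
    rw [← Finset.prod_fiberwise_of_maps_to (g := InfinitePlace.mk)
      (t := Finset.univ.filter (fun w : NumberField.InfinitePlace L =>
        w.comap (algebraMap K L) = v))
      (fun φ hφ => by
        simp only [mem_filter, mem_univ, true_and] at hφ ⊢
        rw [comap_mk]; exact hφ)
      (fun φ => ‖φ x‖)]
    refine Finset.prod_congr rfl (fun w hw => ?_)
    simp only [mem_filter, mem_univ, true_and] at hw
    have hsub : (Finset.univ.filter
        (fun φ : L →+* ℂ => InfinitePlace.mk (φ.comp (algebraMap K L)) = v)).filter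
          (fun φ => InfinitePlace.mk φ = w)
        = Finset.univ.filter (fun φ : L →+* ℂ => InfinitePlace.mk φ = w) := by
      ext φ
      simp only [mem_filter, mem_univ, true_and, and_iff_right_iff_imp]
      intro h; rw [← comap_mk, h, hw]
    rw [hsub]
    have : ∀ φ ∈ Finset.univ.filter (fun φ : L →+* ℂ => InfinitePlace.mk φ = w),
        ‖φ x‖ = w x := by
      intro φ hφ
      simp only [mem_filter, mem_univ, true_and] at hφ
      rw [← hφ, InfinitePlace.apply]
    rw [Finset.prod_congr rfl this, Finset.prod_const, card_filter_mk_eq]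
  rw [key]
  set σ := v.embedding with hσ
  have hmkiff : ∀ φ : L →+* ℂ, InfinitePlace.mk (φ.comp (algebraMap K L)) = v ↔
      (φ.comp (algebraMap K L) = σ ∨
        φ.comp (algebraMap K L) = NumberField.ComplexEmbedding.conjugate σ) := by
    intro φ
    rw [← mk_embedding v, mk_eq_iff]
    constructor
    · rintro (h | h)
      · exact Or.inl h
      · exact Or.inr (by simpa using congrArg NumberField.ComplexEmbedding.conjugate h)
    · rintro (h | h)
      · exact Or.inl h
      · exact Or.inr (by simpa using congrArg NumberField.ComplexEmbedding.conjugate h)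
  have hsplit : (Finset.univ.filter
      (fun φ : L →+* ℂ => InfinitePlace.mk (φ.comp (algebraMap K L)) = v))
      = (Finset.univ.filter (fun φ : L →+* ℂ => φ.comp (algebraMap K L) = σ)) ∪
        (Finset.univ.filter (fun φ : L →+* ℂ =>
          φ.comp (algebraMap K L) = NumberField.ComplexEmbedding.conjugate σ)) := by
    ext φ; simp only [mem_filter, mem_univ, true_and, mem_union, hmkiff]
  rw [hsplit]
  have hvx : v (Algebra.norm K x) = ‖σ (Algebra.norm K x)‖ := by
    rw [← mk_embedding v, InfinitePlace.apply]
  by_cases hre : IsReal v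
  · have hconj : NumberField.ComplexEmbedding.conjugate σ = σ :=
      NumberField.ComplexEmbedding.isReal_iff.mp (isReal_iff.mp hre)
    rw [hconj, Finset.union_idempotent, prod_extensions_eq, mult, if_pos hre, pow_one, hvx]
  · have hconj : NumberField.ComplexEmbedding.conjugate σ ≠ σ := by
      intro h
      exact hre (isReal_iff.mpr (NumberField.ComplexEmbedding.isReal_iff.mpr h))
    have hdisj : Disjoint
        (Finset.univ.filter (fun φ : L →+* ℂ => φ.comp (algebraMap K L) = σ))
        (Finset.univ.filter (fun φ : L →+* ℂ =>
          φ.comp (algebraMap K L) = NumberField.ComplexEmbedding.conjugate σ)) := by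
      rw [Finset.disjoint_filter]
      intro φ _ h1 h2
      exact hconj ((h2 ▸ h1).symm ▸ rfl)
    rw [Finset.prod_union hdisj, prod_extensions_eq, prod_extensions_eq, mult, if_neg hre, hvx]
    have : ‖(NumberField.ComplexEmbedding.conjugate σ) (Algebra.norm K x)‖
        = ‖σ (Algebra.norm K x)‖ := by
      simp [NumberField.ComplexEmbedding.conjugate_coe_eq]
    rw [this, sq]

private lemma sum_log_placesAbove (v : NumberField.InfinitePlace K) (α : L) (hα : α ≠ 0)
    (hnorm : v (Algebra.norm K α) = 1) :
    ∑ w ∈ placesAbove K L v, (w.mult : ℝ) * Real.log (w α) = 0 := by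
  have h := congrArg Real.log (prod_placesAbove_eq v α)
  rw [hnorm, one_pow, Real.log_one, Real.log_prod] at h
  · simpa [Real.log_pow] using h
  · intro w _
    exact pow_ne_zero _ ((map_ne_zero w).mpr hα)

private lemma logEmbedding_linearIndependent {r : ℕ} (u : Fin r → (𝓞 L)ˣ)
    (hind : ∀ m : Fin r → ℤ, (∏ j, (((u j : 𝓞 L) : L)) ^ m j) = 1 → m = 0) :
    LinearIndependent ℝ (fun j : Fin r => logEmbedding L (Additive.ofMul (u j))) := by
  have hmem : ∀ j, logEmbedding L (Additive.ofMul (u j)) ∈ unitLattice L :=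
    fun j => ⟨Additive.ofMul (u j), trivial, rfl⟩
  set x : Fin r → unitLattice L := fun j => ⟨_, hmem j⟩ with hx
  set B := basisUnitLattice L with hB
  set N : Matrix (Fin r) (Fin (rank L)) ℚ := fun j i => ((B.repr (x j) i : ℤ) : ℚ) with hN
  have hZ : LinearIndependent ℤ (fun j : Fin r => N j) := by
    rw [Fintype.linearIndependent_iff]
    intro m hm
    have hrepr : B.repr (∑ j, m j • x j) = 0 := by
      ext i
      have h1 := congrFun hm i
      simp only [Finset.sum_apply, Pi.smul_apply, smul_eq_mul, zsmul_eq_mul,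
        Pi.zero_apply, hN] at h1
      rw [map_sum]
      simp only [Finsupp.coe_finset_sum, Finset.sum_apply, map_zsmul, Finsupp.coe_smul,
        Pi.smul_apply, smul_eq_mul, Finsupp.coe_zero, Pi.zero_apply]
      have h2 : ((∑ j, m j * (B.repr (x j)) i : ℤ) : ℚ) = 0 := by push_cast; exact h1
      exact_mod_cast h2
    have hsum : (∑ j, m j • x j) = 0 := B.repr.map_eq_zero_iff.mp hrepr
    have hlog : logEmbedding L (∑ j, m j • Additive.ofMul (u j)) = 0 := by
      have := congrArg (Submodule.subtype (unitLattice L)) hsum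
      simpa [map_sum, map_zsmul, hx] using this
    have htor : (∏ j, (u j) ^ (m j)) ∈ torsion L := by
      rw [← logEmbedding_eq_zero_iff]
      have hofmul : Additive.ofMul (∏ j, (u j) ^ (m j))
          = ∑ j, m j • Additive.ofMul (u j) := by
        simp only [← ofMul_zpow]
        induction (Finset.univ : Finset (Fin r)) using Finset.induction with
        | empty => simp
        | insert a s hnot ih =>
            rw [Finset.prod_insert hnot, Finset.sum_insert hnot, ← ih]
            rfl
      rw [hofmul]
      exact hlog
    obtain ⟨n, hn, hpow⟩ := (isOfFinOrder_iff_pow_eq_one).mp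
      (CommGroup.mem_torsion _ |>.mp htor)
    set ψ : (𝓞 L)ˣ →* Lˣ := Units.map (algebraMap (𝓞 L) L : (𝓞 L) →* L) with hψ
    have hval : ∀ j, ((ψ (u j) : Lˣ) : L) = ((u j : 𝓞 L) : L) := fun j => rfl
    have key : (∏ j, (ψ (u j)) ^ (m j * (n : ℤ))) = (1 : Lˣ) := by
      calc (∏ j, (ψ (u j)) ^ (m j * (n : ℤ)))
          = ∏ j, ((ψ (u j)) ^ (m j)) ^ (n : ℤ) := by
            exact Finset.prod_congr rfl fun j _ => _root_.zpow_mul _ _ _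
        _ = (∏ j, (ψ (u j)) ^ (m j)) ^ (n : ℤ) := by
            rw [← Finset.prod_zpow]
        _ = (ψ (∏ j, (u j) ^ (m j))) ^ (n : ℤ) := by
            rw [map_prod]
            exact congrArg (· ^ (n:ℤ)) (Finset.prod_congr rfl fun j _ => (map_zpow ψ _ _).symm)
        _ = ψ ((∏ j, (u j) ^ (m j)) ^ (n : ℤ)) := (map_zpow ψ _ _).symm
        _ = 1 := by
            rw [zpow_natCast, hpow]
            exact map_one ψ
    have keyL : (∏ j, (((u j : 𝓞 L) : L)) ^ (m j * (n : ℤ))) = 1 := by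
      have := congrArg ((↑) : Lˣ → L) key
      rw [Units.val_one] at this
      rw [← this]
      rw [← Units.coeHom_apply, map_prod]
      exact Finset.prod_congr rfl fun j _ => by
        rw [Units.coeHom_apply, Units.val_zpow_eq_zpow_val, hval]
    have hm0 := hind _ keyL
    intro j
    have hj := congrFun hm0 j
    simp only [Pi.zero_apply] at hj
    rcases mul_eq_zero.mp hj with h | h
    · exact h
    · exact absurd h (by exact_mod_cast hn.ne')
  have hQ : LinearIndependent ℚ (fun j : Fin r => N j) :=
    (LinearIndependent.iff_fractionRing ℤ ℚ).mp hZ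
  have hR := rows_indep_cast N hQ
  rw [Fintype.linearIndependent_iff]
  intro c hc
  set B' := B.ofZLatticeBasis ℝ (unitLattice L) with hB'
  have hrep : ∀ j i, (B'.repr (logEmbedding L (Additive.ofMul (u j)))) i = ((N j i : ℝ)) := by
    intro j i
    have hxe : (logEmbedding L (Additive.ofMul (u j))) = ((x j : unitLattice L) : _) := rfl
    rw [hxe, hB', Basis.ofZLatticeBasis_repr_apply]
    simp [hN]
  have hc' : ∑ j, c j • (fun i => ((N j i : ℝ))) = 0 := by
    funext i
    have h1 := congrArg (fun y => (B'.repr y) i) hc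
    simp only [map_sum, _root_.map_smul, Finsupp.coe_finset_sum, Finsupp.coe_smul,
      Finset.sum_apply, Pi.smul_apply, smul_eq_mul, map_zero, Finsupp.coe_zero,
      Pi.zero_apply] at h1
    rw [Finset.sum_apply]
    simp only [Pi.smul_apply, smul_eq_mul, Pi.zero_apply]
    rw [← h1]
    exact Finset.sum_congr rfl fun j _ => by rw [hrep]
  exact Fintype.linearIndependent_iff.mp hR c hc'

private lemma finrank_subspaceD :
    finrank ℝ (subspaceD K L) =
      Fintype.card (NumberField.InfinitePlace L) - Fintype.card (NumberField.InfinitePlace K) := by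
  haveI : FiniteDimensional K L := Module.Finite.of_restrictScalars_finite ℚ K L
  haveI : Algebra.IsAlgebraic K L := Algebra.IsAlgebraic.of_finite K L
  set Φ : (NumberField.InfinitePlace L → ℝ) →ₗ[ℝ] (NumberField.InfinitePlace K → ℝ) :=
    LinearMap.pi (fun v => sumAbove K L v) with hΦ
  have hker : LinearMap.ker Φ = subspaceD K L := by
    rw [hΦ, LinearMap.ker_pi]; rfl
  have hsurj : LinearMap.range Φ = ⊤ := by
    rw [← top_le_iff, ← (Pi.basisFun ℝ (NumberField.InfinitePlace K)).span_eq, Submodule.span_le]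
    rintro _ ⟨v, rfl⟩
    obtain ⟨w0, hw0⟩ := comap_surjective (k := K) (K := L) v
    refine ⟨Pi.single w0 1, ?_⟩
    funext v'
    simp only [hΦ, LinearMap.pi_apply, sumAbove, LinearMap.sum_apply, LinearMap.proj_apply]
    rw [Pi.basisFun_apply]
    by_cases h : v' = v
    · subst h
      rw [Finset.sum_eq_single_of_mem w0 (by
          simp only [placesAbove, mem_filter, mem_univ, true_and]; exact hw0)
        (fun w _ hne => Pi.single_eq_of_ne hne 1)]
      simp
    · have hz : ∑ w ∈ placesAbove K L v', Pi.single w0 (1:ℝ) w = 0 := by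
        refine Finset.sum_eq_zero fun w hw => ?_
        simp only [placesAbove, mem_filter, mem_univ, true_and] at hw
        exact Pi.single_eq_of_ne (fun hh => h (by rw [← hw, hh]; exact hw0)) 1
      rw [hz, Pi.single_apply, if_neg h]
  have hfin := LinearMap.finrank_range_add_finrank_ker Φ
  rw [hsurj, hker, finrank_top] at hfin
  rw [Module.finrank_fintype_fun_eq_card, Module.finrank_fintype_fun_eq_card] at hfin
  omega

end Aux

/-- **(3.10)–(3.12).** Let `ε₁, …, ε_{r(l/k)}` (with `r(l/k) = r(l) − r(k)`) be
multiplicatively independent relative units in `E_{l/k}(𝔐)`, and let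
`M = (log|ε_j|_w)` be the matrix indexed by archimedean places `w` of `l` and
`j = 1, …, r(l/k)`.  Then `M` has rank `r(l/k)`, and `y ↦ My` maps `ℝ^{r(l/k)}` onto the
subspace `D_{r(l/k)}`. -/
theorem logMatrix_rank_and_range
    (K L : Type*) [Field K] [NumberField K] [Field L] [NumberField L] [Algebra K L]
    (e : ℕ) (he : e = finrank K L) (b : Basis (Fin e) K L)
    (hbInt : ∀ i, IsIntegral ℤ (b i))
    (M : Set L) (hM : M = fullModule K (fun i => b i))
    (ε : Fin (Units.rank L - Units.rank K) → L)
    (hε : ∀ j, ε j ∈ relUnits K L M) (hind : MulIndep ε)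
    (Mmat : Matrix (InfinitePlace L) (Fin (Units.rank L - Units.rank K)) ℝ)
    (hMmat : Mmat = fun w j => infLogAbs L w (ε j)) :
    Mmat.rank = Units.rank L - Units.rank K ∧
      LinearMap.range Mmat.mulVecLin = subspaceD K L := by
  classical
  haveI : FiniteDimensional K L := Module.Finite.of_restrictScalars_finite ℚ K L
  choose u hu using fun j => (hε j).1.2
  have hεu : ∀ j, ε j = ((u j : 𝓞 L) : L) := fun j => (hu j).symm
  have hεne : ∀ j, ε j ≠ 0 := by
    intro j
    rw [hεu j]
    exact NumberField.Units.coe_ne_zero (u j)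
  have hd : (0:ℝ) < (finrank ℚ L : ℝ) := by exact_mod_cast Module.finrank_pos
  -- all archimedean absolute values of the relative norm are 1
  have hnorm1 : ∀ (j) (v : NumberField.InfinitePlace K), v (Algebra.norm K (ε j)) = 1 := by
    intro j v
    obtain ⟨n, hn, hpow⟩ := (hε j).2
    have h1 : (v (Algebra.norm K (ε j))) ^ n = 1 := by
      rw [← map_pow, hpow, map_one]
    have h0 : 0 ≤ v (Algebra.norm K (ε j)) := AbsoluteValue.nonneg _ _
    rcases lt_trichotomy (v (Algebra.norm K (ε j))) 1 with h | h | h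
    · exact absurd h1 (ne_of_lt (pow_lt_one₀ h0 h hn.ne'))
    · exact h
    · exact absurd h1 (ne_of_gt (one_lt_pow₀ h hn.ne'))
  -- the columns sum to 0 over the places above any `v`
  have hcol0 : ∀ (j) (v : NumberField.InfinitePlace K),
      ∑ w ∈ placesAbove K L v, Mmat w j = 0 := by
    intro j v
    have hsum := sum_log_placesAbove v (ε j) (hεne j) (hnorm1 j v)
    calc ∑ w ∈ placesAbove K L v, Mmat w j
        = (finrank ℚ L : ℝ)⁻¹ *
            ∑ w ∈ placesAbove K L v, (w.mult : ℝ) * Real.log (w (ε j)) := by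
          rw [Finset.mul_sum]
          refine Finset.sum_congr rfl fun w _ => ?_
          rw [hMmat]
          simp only [infLogAbs]
          ring
      _ = 0 := by rw [hsum, mul_zero]
  -- independence of the columns
  have hind' : ∀ m : Fin (Units.rank L - Units.rank K) → ℤ,
      (∏ j, (((u j : 𝓞 L) : L)) ^ m j) = 1 → m = 0 := by
    intro m hm
    refine hind m ?_
    rw [show (fun j => ε j ^ m j) = fun j => (((u j : 𝓞 L) : L)) ^ m j from
      funext fun j => by rw [hεu j]] at *
    exact hm
  have hlogind := logEmbedding_linearIndependent u hind'
  have hcols : LinearIndependent ℝ (fun j => Mmat.transpose j) := by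
    rw [Fintype.linearIndependent_iff]
    intro c hc
    refine Fintype.linearIndependent_iff.mp hlogind c ?_
    funext w
    have hcw := congrFun hc w.1
    simp only [Finset.sum_apply, Pi.smul_apply, smul_eq_mul, Pi.zero_apply,
      Matrix.transpose_apply, hMmat, infLogAbs] at hcw
    simp only [Finset.sum_apply, Pi.smul_apply, smul_eq_mul, Pi.zero_apply,
      NumberField.Units.dirichletUnitTheorem.logEmbedding_component]
    have hexp : ∀ j, (w.1.mult : ℝ) * Real.log (w.1 ((u j : 𝓞 L) : L))
        = (finrank ℚ L : ℝ) * ((w.1.mult : ℝ) / (finrank ℚ L : ℝ) * Real.log (w.1 (ε j))) := by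
      intro j
      rw [hεu j]
      field_simp
    calc ∑ j, c j * ((w.1.mult : ℝ) * Real.log (w.1 ((u j : 𝓞 L) : L)))
        = (finrank ℚ L : ℝ) * ∑ j, c j *
            ((w.1.mult : ℝ) / (finrank ℚ L : ℝ) * Real.log (w.1 (ε j))) := by
          rw [Finset.mul_sum]
          exact Finset.sum_congr rfl fun j _ => by rw [hexp j]; ring
      _ = 0 := by rw [show (∑ j, c j * ((w.1.mult : ℝ) / (finrank ℚ L : ℝ) * Real.log (w.1 (ε j)))) = 0 from hcw, mul_zero]
  constructor
  · have h1 : Mmat.transpose.rank = Fintype.card (Fin (Units.rank L - Units.rank K)) :=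
      hcols.rank_matrix
    rw [← Matrix.rank_transpose Mmat, h1, Fintype.card_fin]
  · rw [Matrix.range_mulVecLin]
    have hle : Submodule.span ℝ (Set.range Mmat.transpose) ≤ subspaceD K L := by
      rw [Submodule.span_le]
      rintro _ ⟨j, rfl⟩
      simp only [SetLike.mem_coe, subspaceD, Submodule.mem_iInf]
      intro v
      rw [LinearMap.mem_ker, sumAbove, LinearMap.sum_apply]
      have := hcol0 j v
      simpa [LinearMap.proj_apply] using this
    have hcardle : Fintype.card (NumberField.InfinitePlace K)
        ≤ Fintype.card (NumberField.InfinitePlace L) :=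
      NumberField.InfinitePlace.card_mono (k := K) (K := L)
    have hKpos : 0 < Fintype.card (NumberField.InfinitePlace K) := Fintype.card_pos
    have hfinD : finrank ℝ (subspaceD K L)
        = Fintype.card (NumberField.InfinitePlace L)
          - Fintype.card (NumberField.InfinitePlace K) := finrank_subspaceD
    have hsp : finrank ℝ (Submodule.span ℝ (Set.range Mmat.transpose))
        = Units.rank L - Units.rank K := by
      have h2 := linearIndependent_iff_card_eq_finrank_span.mp hcols
      rw [Fintype.card_fin] at h2
      exact h2.symm
    refine Submodule.eq_of_le_of_finrank_le hle ?_
    rw [hfinD, show Submodule.span ℝ (Set.range Mmat.col) = Submodule.span ℝ (Set.range Mmat.transpose) from rfl, hsp]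
    unfold NumberField.Units.rank
    omega
end
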